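/- arXiv:2310.17757 — 2 statements merged into one kernel-verified Lean document; each statement's English description precedes it below -/
import Mathlib

section
/- Let T be a finite tree and v a vertex of T. Then 3(N_T R_v − N_v R_T) ≥ N_T² − N_v N_T. -/
variable {V : Type*}

/-- A subtree of a graph: a nonempty set of vertices inducing a connected subgraph. -/
def IsSubtree (G : SimpleGraph V) (s : Finset V) : Prop :=
  s.Nonempty ∧ (G.induce (s : Set V)).Connected

open Classical in
/-- `N_T`: the number of subtrees of `G`. -/
noncomputable def numSubtrees [Fintype V] (G : SimpleGraph V) : ℕ :=
  (Finset.univ.filter fun s : Finset V => IsSubtree G s).card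

open Classical in
/-- `R_T`: the sum of the orders of all subtrees of `G`. -/
noncomputable def sumSubtrees [Fintype V] (G : SimpleGraph V) : ℕ :=
  ∑ s ∈ Finset.univ.filter (fun s : Finset V => IsSubtree G s), s.card

open Classical in
/-- `N_v`: the number of subtrees of `G` containing `v`. -/
noncomputable def numSubtreesAt [Fintype V] (G : SimpleGraph V) (v : V) : ℕ :=
  (Finset.univ.filter fun s : Finset V => IsSubtree G s ∧ v ∈ s).card

open Classical in
/-- `R_v`: the sum of the orders of all subtrees of `G` containing `v`. -/
noncomputable def sumSubtreesAt [Fintype V] (G : SimpleGraph V) (v : V) : ℕ :=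
  ∑ s ∈ Finset.univ.filter (fun s : Finset V => IsSubtree G s ∧ v ∈ s), s.card

/-- `μ_T`: the mean subtree order (global mean) of `G`. -/
noncomputable def meanSubtreeOrder [Fintype V] (G : SimpleGraph V) : ℚ :=
  (sumSubtrees G : ℚ) / (numSubtrees G : ℚ)

/-- `μ_T(v)`: the local mean of `G` at `v`. -/
noncomputable def localMean [Fintype V] (G : SimpleGraph V) (v : V) : ℚ :=
  (sumSubtreesAt G v : ℚ) / (numSubtreesAt G v : ℚ)

/-- The tree obtained by contracting the edge `uv`: the vertex `v` is merged into `u`. -/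
def contractEdge (G : SimpleGraph V) (u v : V) : SimpleGraph {x : V // x ≠ v} where
  Adj a b := a ≠ b ∧ (G.Adj a.1 b.1 ∨ (a.1 = u ∧ G.Adj v b.1) ∨ (b.1 = u ∧ G.Adj v a.1))
  symm := by
    refine ⟨?_⟩
    rintro a b ⟨hne, h⟩
    refine ⟨hne.symm, ?_⟩
    rcases h with h | h | h
    · exact Or.inl h.symm
    · exact Or.inr (Or.inr h)
    · exact Or.inr (Or.inl h)
  loopless := by refine ⟨?_⟩; rintro a ⟨hne, -⟩; exact hne rfl

namespace SubtreePf
open SimpleGraph Finset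

variable {G : SimpleGraph V}

/-- walks contained in a set give reachability in the induced graph -/
lemma reachable_induce_of_walk {s : Set V} :
    ∀ {x y : V} (p : G.Walk x y), (∀ z ∈ p.support, z ∈ s) →
      ∀ (hx : x ∈ s) (hy : y ∈ s), (G.induce s).Reachable ⟨x, hx⟩ ⟨y, hy⟩ := by
  intro x y p
  induction p with
  | nil => intro _ hx hy; exact Reachable.refl _
  | @cons a b c h q ih =>
    intro hsub ha hc
    have hb : b ∈ s := hsub b (by simp)
    have hadj : (G.induce s).Adj ⟨a, ha⟩ ⟨b, hb⟩ := by
      simp only [comap_adj, Function.Embedding.coe_subtype]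
      exact h
    exact (hadj.reachable).trans (ih (fun z hz => hsub z (by simp [hz])) hb hc)

lemma isSubtree_iff {s : Finset V} :
    IsSubtree G s ↔ s.Nonempty ∧
      ∀ x ∈ s, ∀ y ∈ s, ∃ p : G.Walk x y, ∀ z ∈ p.support, z ∈ s := by
  constructor
  · rintro ⟨hne, hconn⟩
    refine ⟨hne, fun x hx y hy => ?_⟩
    obtain ⟨p⟩ := hconn.preconnected ⟨x, by simpa using hx⟩ ⟨y, by simpa using hy⟩
    refine ⟨p.map (SimpleGraph.Embedding.induce (s : Set V)).toHom, ?_⟩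
    intro z hz
    change z ∈ (p.map (SimpleGraph.Embedding.induce (s : Set V)).toHom).support at hz
    rw [SimpleGraph.Walk.support_map, List.mem_map] at hz
    obtain ⟨⟨z', hz'⟩, _, rfl⟩ := hz
    simpa using hz'
  · rintro ⟨hne, hwalk⟩
    refine ⟨hne, ?_⟩
    have hne2 : ((s : Set V)).Nonempty := by exact_mod_cast hne
    haveI := Set.Nonempty.to_subtype hne2
    apply SimpleGraph.Connected.mk
    rintro ⟨x, hx⟩ ⟨y, hy⟩
    obtain ⟨p, hp⟩ := hwalk x (by simpa using hx) y (by simpa using hy)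
    exact reachable_induce_of_walk p (fun z hz => by simpa using hp z hz) hx hy

lemma isSubtree_singleton (v : V) : IsSubtree G {v} := by
  rw [isSubtree_iff]
  refine ⟨⟨v, by simp⟩, ?_⟩
  intro x hx y hy
  simp only [mem_singleton] at hx hy
  subst hx; subst hy
  exact ⟨SimpleGraph.Walk.nil, by simp⟩

/-- connectivity via a center vertex -/
lemma isSubtree_of_walks_to_center {s : Finset V} {v : V} (hv : v ∈ s)
    (h : ∀ z ∈ s, ∃ p : G.Walk z v, ∀ t ∈ p.support, t ∈ s) : IsSubtree G s := by
  rw [isSubtree_iff]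
  refine ⟨⟨v, hv⟩, fun x hx y hy => ?_⟩
  obtain ⟨p, hp⟩ := h x hx
  obtain ⟨q, hq⟩ := h y hy
  refine ⟨p.append q.reverse, ?_⟩
  intro z hz
  rw [SimpleGraph.Walk.mem_support_append_iff] at hz
  rcases hz with hz | hz
  · exact hp z hz
  · exact hq z (by simpa using hz)

/-- in a subtree, you can walk to any member within the subtree -/
lemma walk_to_of_isSubtree {s : Finset V} (hs : IsSubtree G s) {x v : V}
    (hx : x ∈ s) (hv : v ∈ s) : ∃ p : G.Walk x v, ∀ t ∈ p.support, t ∈ s :=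
  (isSubtree_iff.mp hs).2 x hx v hv


open SimpleGraph Finset
open scoped Classical

variable {G : SimpleGraph V} [DecidableEq V]

noncomputable def ST (G : SimpleGraph V) (A : Finset V) : Finset (Finset V) :=
  A.powerset.filter (fun s => IsSubtree G s)

noncomputable def STat (G : SimpleGraph V) (A : Finset V) (v : V) : Finset (Finset V) :=
  A.powerset.filter (fun s => IsSubtree G s ∧ v ∈ s)

noncomputable def stN (G : SimpleGraph V) (A : Finset V) : ℕ := (ST G A).card
noncomputable def stR (G : SimpleGraph V) (A : Finset V) : ℕ := ∑ s ∈ ST G A, s.card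
noncomputable def stNat (G : SimpleGraph V) (A : Finset V) (v : V) : ℕ := (STat G A v).card
noncomputable def stRat (G : SimpleGraph V) (A : Finset V) (v : V) : ℕ :=
  ∑ s ∈ STat G A v, s.card

lemma mem_ST {A s : Finset V} : s ∈ ST G A ↔ s ⊆ A ∧ IsSubtree G s := by
  simp [ST, mem_filter, mem_powerset]

lemma mem_STat {A s : Finset V} {v : V} :
    s ∈ STat G A v ↔ s ⊆ A ∧ IsSubtree G s ∧ v ∈ s := by
  simp [STat, mem_filter, mem_powerset]

/-- splitting off the subtrees avoiding `v` -/
lemma ST_split (A : Finset V) (v : V) :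
    ST G A = STat G A v ∪ ST G (A.erase v) ∧ Disjoint (STat G A v) (ST G (A.erase v)) := by
  constructor
  · ext s
    simp only [mem_ST, mem_STat, mem_union, Finset.subset_erase]
    by_cases hv : v ∈ s <;> tauto
  · rw [Finset.disjoint_left]
    rintro s hs hs'
    rw [mem_STat] at hs
    rw [mem_ST, Finset.subset_erase] at hs'
    exact hs'.1.2 hs.2.2

lemma stN_split (A : Finset V) (v : V) : stN G A = stNat G A v + stN G (A.erase v) := by
  obtain ⟨h1, h2⟩ := ST_split (G := G) A v
  rw [stN, h1, Finset.card_union_of_disjoint h2]; rfl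

lemma stR_split (A : Finset V) (v : V) : stR G A = stRat G A v + stR G (A.erase v) := by
  obtain ⟨h1, h2⟩ := ST_split (G := G) A v
  rw [stR, h1, Finset.sum_union h2]; rfl

lemma ST_singleton (v : V) (hs : IsSubtree G {v}) : ST G {v} = {({v} : Finset V)} := by
  ext s
  simp only [mem_ST, Finset.subset_singleton_iff, mem_singleton]
  constructor
  · rintro ⟨h1 | h1, h2⟩
    · exact absurd h2.1 (by simp [h1])
    · exact h1
  · rintro rfl; exact ⟨Or.inr rfl, hs⟩

lemma STat_singleton (v : V) (hs : IsSubtree G {v}) : STat G {v} v = {({v} : Finset V)} := by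
  ext s
  simp only [mem_STat, Finset.subset_singleton_iff, mem_singleton]
  constructor
  · rintro ⟨h1 | h1, h2, h3⟩
    · exact absurd h3 (by simp [h1])
    · exact h1
  · rintro rfl; exact ⟨Or.inr rfl, hs, by simp⟩


end SubtreePf

namespace SubtreePf
open SimpleGraph Finset
open scoped Classical
variable {G : SimpleGraph V} [DecidableEq V]

lemma walk_to_nbr {A S : Finset V} {w : V} (hSA : S ⊆ A) :
    ∀ {z v : V} (p : G.Walk z v), (∀ x ∈ A, G.Adj v x → x = w) →
      (∀ t ∈ p.support, t ∈ S) → z ≠ v →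
      ∃ q : G.Walk z w, ∀ t ∈ q.support, t ∈ S ∧ t ≠ v := by
  intro z v p
  induction p with
  | nil => intro _ _ hz; exact absurd rfl hz
  | @cons a b c h q ih =>
    intro huniq hsub hza
    have ha : a ∈ S := hsub a (by simp)
    by_cases hb : b = c
    · subst hb
      have haw : a = w := huniq a (hSA ha) h.symm
      subst haw
      exact ⟨SimpleGraph.Walk.nil, by simp [ha, hza]⟩
    · obtain ⟨q', hq'⟩ := ih huniq (fun t ht => hsub t (by simp [ht])) hb
      refine ⟨SimpleGraph.Walk.cons h q', ?_⟩
      intro t ht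
      rw [SimpleGraph.Walk.support_cons, List.mem_cons] at ht
      rcases ht with rfl | ht
      · exact ⟨ha, hza⟩
      · exact hq' t ht

section Leaf
variable {A : Finset V} {v w : V}
  (hvA : v ∈ A) (hw : w ∈ A.erase v) (hadj : G.Adj v w)
  (huniq : ∀ x ∈ A, G.Adj v x → x = w)

include hvA hw hadj huniq in
lemma leaf_STat : STat G A v = insert {v} ((STat G (A.erase v) w).image (insert v)) := by
  ext s
  simp only [mem_insert, Finset.mem_image]
  constructor
  · rintro hs
    rw [mem_STat] at hs
    obtain ⟨hsA, hst, hvs⟩ := hs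
    by_cases hsv : s = {v}
    · exact Or.inl hsv
    · refine Or.inr ⟨s.erase v, ?_, ?_⟩
      · rw [mem_STat]
        have hz : ∃ z, z ∈ s.erase v := by
          by_contra hno
          push_neg at hno
          exact hsv (Finset.eq_singleton_iff_unique_mem.mpr
            ⟨hvs, fun x hx => by
              by_contra hxv
              exact hno x (Finset.mem_erase.mpr ⟨hxv, hx⟩)⟩)
        obtain ⟨z, hz⟩ := hz
        have hcenter : ∀ z' ∈ s.erase v, ∃ q : G.Walk z' w,
            ∀ t ∈ q.support, t ∈ s.erase v := by
          intro z' hz'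
          obtain ⟨p, hp⟩ := walk_to_of_isSubtree hst (Finset.mem_of_mem_erase hz') hvs
          obtain ⟨q, hq⟩ := walk_to_nbr hsA p huniq hp (Finset.ne_of_mem_erase hz')
          exact ⟨q, fun t ht => Finset.mem_erase.mpr ⟨(hq t ht).2, (hq t ht).1⟩⟩
        have hwmem : w ∈ s.erase v := by
          obtain ⟨q, hq⟩ := hcenter z hz
          exact hq w q.end_mem_support
        refine ⟨Finset.erase_subset_erase v hsA, ⟨⟨w, hwmem⟩, ?_⟩, hwmem⟩
        have := isSubtree_of_walks_to_center (G := G) hwmem hcenter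
        exact this.2
      · exact Finset.insert_erase hvs
  · rintro (rfl | ⟨s', hs', rfl⟩)
    · rw [mem_STat]
      exact ⟨Finset.singleton_subset_iff.mpr hvA, isSubtree_singleton v, by simp⟩
    · rw [mem_STat] at hs' ⊢
      obtain ⟨hs'A, hs't, hws'⟩ := hs'
      have hvns' : v ∉ s' := fun h => (Finset.mem_erase.mp (hs'A h)).1 rfl
      refine ⟨?_, ?_, by simp⟩
      · intro x hx
        rcases Finset.mem_insert.mp hx with rfl | hx
        · exact hvA
        · exact Finset.mem_of_mem_erase (hs'A hx)
      · refine isSubtree_of_walks_to_center (G := G) (v := v) (by simp) ?_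
        intro z hz
        rcases Finset.mem_insert.mp hz with rfl | hz
        · exact ⟨SimpleGraph.Walk.nil, by simp⟩
        · obtain ⟨p, hp⟩ := walk_to_of_isSubtree hs't hz hws'
          refine ⟨p.append (SimpleGraph.Walk.cons hadj.symm SimpleGraph.Walk.nil), ?_⟩
          intro t ht
          rw [SimpleGraph.Walk.mem_support_append_iff] at ht
          rcases ht with ht | ht
          · exact Finset.mem_insert_of_mem (hp t ht)
          · have ht' : t = w ∨ t = v := by simpa using ht
            rcases ht' with rfl | rfl
            · exact Finset.mem_insert_of_mem hws'
            · exact Finset.mem_insert_self _ _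

include hvA hw hadj huniq in
lemma leaf_counts : stNat G A v = 1 + stNat G (A.erase v) w ∧
    stRat G A v = 1 + (stRat G (A.erase v) w + stNat G (A.erase v) w) := by
  have hinj : Set.InjOn (insert v) ((STat G (A.erase v) w : Finset (Finset V)) : Set (Finset V)) := by
    intro s₁ h₁ s₂ h₂ heq
    have hv₁ : v ∉ s₁ := fun h => (Finset.mem_erase.mp ((mem_STat.mp h₁).1 h)).1 rfl
    have hv₂ : v ∉ s₂ := fun h => (Finset.mem_erase.mp ((mem_STat.mp h₂).1 h)).1 rfl
    have := congrArg (Finset.erase · v) heq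
    simpa [Finset.erase_insert hv₁, Finset.erase_insert hv₂] using this
  have hnm : ({v} : Finset V) ∉ (STat G (A.erase v) w).image (insert v) := by
    rw [Finset.mem_image]
    rintro ⟨s', hs', heq⟩
    have hws' : w ∈ s' := (mem_STat.mp hs').2.2
    have : w ∈ ({v} : Finset V) := heq ▸ Finset.mem_insert_of_mem hws'
    exact (Finset.mem_erase.mp hw).1 (Finset.mem_singleton.mp this)
  have hcards : ∀ s' ∈ STat G (A.erase v) w, (insert v s').card = s'.card + 1 := by
    intro s' hs'
    have hv' : v ∉ s' := fun h => (Finset.mem_erase.mp ((mem_STat.mp hs').1 h)).1 rfl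
    rw [Finset.card_insert_of_notMem hv']
  constructor
  · rw [stNat, leaf_STat hvA hw hadj huniq, Finset.card_insert_of_notMem hnm,
      Finset.card_image_of_injOn hinj, add_comm]
    rfl
  · rw [stRat, leaf_STat hvA hw hadj huniq, Finset.sum_insert hnm,
      Finset.sum_image (fun x hx y hy h => hinj hx hy h)]
    rw [Finset.card_singleton]
    rw [Finset.sum_congr rfl hcards, Finset.sum_add_distrib]
    simp [stRat, stNat]

end Leaf
end SubtreePf

namespace SubtreePf
open SimpleGraph Finset
open scoped Classical
variable {G : SimpleGraph V} [DecidableEq V]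

/-- generic walk rerouting: avoid a "closed" set K -/
lemma walk_avoid {K S : Finset V} :
    ∀ {z v : V} (p : G.Walk z v), v ∉ K →
      (∀ b y, b ∈ K → y ∈ S → y ≠ v → G.Adj b y → y ∈ K) →
      (∀ t ∈ p.support, t ∈ S) → z ∉ K →
      ∃ q : G.Walk z v, ∀ t ∈ q.support, t ∈ S ∧ t ∉ K := by
  intro z v p
  induction p with
  | nil =>
    intro hvK _ hsup hzK
    refine ⟨SimpleGraph.Walk.nil, ?_⟩
    intro t ht
    rw [SimpleGraph.Walk.support_nil, List.mem_singleton] at ht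
    subst ht
    exact ⟨hsup _ (by simp), hzK⟩
  | @cons a b c h q ih =>
    intro hvK hclo hsup haK
    have ha : a ∈ S := hsup a (by simp)
    have hc : c ∈ S := hsup c (SimpleGraph.Walk.end_mem_support _)
    by_cases hac : a = c
    · subst hac; exact ⟨SimpleGraph.Walk.nil, by simp [ha, haK]⟩
    · have hb : b ∈ S := hsup b (by simp)
      by_cases hbc : b = c
      · subst hbc
        exact ⟨SimpleGraph.Walk.cons h SimpleGraph.Walk.nil, by
          intro t ht
          have : t = a ∨ t = b := by simpa using ht
          rcases this with rfl | rfl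
          · exact ⟨ha, haK⟩
          · exact ⟨hb, hvK⟩⟩
      · have hbK : b ∉ K := by
          intro hbK
          exact haK (hclo b a hbK ha hac h.symm)
        obtain ⟨q', hq'⟩ := ih hvK hclo (fun t ht => hsup t (by simp [ht])) hbK
        refine ⟨SimpleGraph.Walk.cons h q', ?_⟩
        intro t ht
        have : t = a ∨ t ∈ q'.support := by simpa using ht
        rcases this with rfl | ht'
        · exact ⟨ha, haK⟩
        · exact hq' t ht'

/-- generic walk rerouting: stay inside K ∪ {endpoint} -/
lemma walk_stay {K S : Finset V} :
    ∀ {z v : V} (p : G.Walk z v),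
      (∀ b y, b ∈ K → y ∈ S → y ≠ v → G.Adj b y → y ∈ K) →
      (∀ t ∈ p.support, t ∈ S) → (z ∈ K ∨ z = v) →
      ∃ q : G.Walk z v, ∀ t ∈ q.support, t ∈ S ∧ (t ∈ K ∨ t = v) := by
  intro z v p
  induction p with
  | nil =>
    intro _ hsup _
    refine ⟨SimpleGraph.Walk.nil, ?_⟩
    intro t ht
    rw [SimpleGraph.Walk.support_nil, List.mem_singleton] at ht
    subst ht
    exact ⟨hsup _ (by simp), Or.inr rfl⟩
  | @cons a b c h q ih =>
    intro hclo hsup haK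
    have ha : a ∈ S := hsup a (by simp)
    have hc : c ∈ S := hsup c (SimpleGraph.Walk.end_mem_support _)
    by_cases hac : a = c
    · subst hac; exact ⟨SimpleGraph.Walk.nil, by simp [ha]⟩
    · have haK' : a ∈ K := haK.resolve_right hac
      have hb : b ∈ S := hsup b (by simp)
      by_cases hbc : b = c
      · subst hbc
        exact ⟨SimpleGraph.Walk.cons h SimpleGraph.Walk.nil, by
          intro t ht
          have : t = a ∨ t = b := by simpa using ht
          rcases this with rfl | rfl
          · exact ⟨ha, Or.inl haK'⟩
          · exact ⟨hb, Or.inr rfl⟩⟩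
      · have hbK : b ∈ K := hclo a b haK' hb hbc h
        obtain ⟨q', hq'⟩ := ih hclo (fun t ht => hsup t (by simp [ht])) (Or.inl hbK)
        refine ⟨SimpleGraph.Walk.cons h q', ?_⟩
        intro t ht
        have : t = a ∨ t ∈ q'.support := by simpa using ht
        rcases this with rfl | ht'
        · exact ⟨ha, Or.inl haK'⟩
        · exact hq' t ht'

/-- walks starting in a closed set stay in it -/
lemma walk_in_closed {K S : Finset V}
    (hclo : ∀ b y, b ∈ K → y ∈ S → G.Adj b y → y ∈ K) :
    ∀ {a b : V} (p : G.Walk a b), (∀ t ∈ p.support, t ∈ S) → a ∈ K → b ∈ K := by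
  intro a b p
  induction p with
  | nil => intro _ h; exact h
  | @cons a b c h q ih =>
    intro hsup haK
    have hb : b ∈ S := hsup b (by simp)
    exact ih (fun t ht => hsup t (by simp [ht])) (hclo a b haK hb h)

section Glue

variable {A : Finset V} {v u : V}

/-- the connected component of `u` in `A \ {v}` -/
noncomputable def comp (G : SimpleGraph V) (A : Finset V) (v u : V) : Finset V :=
  (A.erase v).filter (fun b => ∃ p : G.Walk u b, ∀ t ∈ p.support, t ∈ A.erase v)

lemma comp_subset : comp G A v u ⊆ A.erase v := Finset.filter_subset _ _

lemma mem_comp_self (hu : u ∈ A.erase v) : u ∈ comp G A v u := by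
  rw [comp, Finset.mem_filter]
  exact ⟨hu, SimpleGraph.Walk.nil, by simpa using hu⟩

lemma comp_closed {b y : V} (hb : b ∈ comp G A v u) (hy : y ∈ A.erase v)
    (hadj : G.Adj b y) : y ∈ comp G A v u := by
  rw [comp, Finset.mem_filter] at hb ⊢
  obtain ⟨hbA, p, hp⟩ := hb
  refine ⟨hy, p.append (SimpleGraph.Walk.cons hadj SimpleGraph.Walk.nil), ?_⟩
  intro t ht
  rw [SimpleGraph.Walk.mem_support_append_iff] at ht
  rcases ht with ht | ht
  · exact hp t ht
  · have : t = b ∨ t = y := by simpa using ht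
    rcases this with rfl | rfl
    · exact hbA
    · exact hy

lemma comp_closed' {b y : V} (hb : b ∈ comp G A v u) (hy : y ∈ A) (hyv : y ≠ v)
    (hadj : G.Adj b y) : y ∈ comp G A v u :=
  comp_closed hb (Finset.mem_erase.mpr ⟨hyv, hy⟩) hadj

end Glue
end SubtreePf

namespace SubtreePf
open SimpleGraph Finset
open scoped Classical
variable {G : SimpleGraph V} [DecidableEq V]

section GlueMain

variable {A : Finset V} {v u : V}
  (hA : IsSubtree G A) (hvA : v ∈ A) (huA : u ∈ A) (huv : G.Adj v u)

lemma hvCC : v ∉ comp G A v u := fun h => (Finset.mem_erase.mp (comp_subset h)).1 rfl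

include hvA huA huv in
lemma huCC : u ∈ comp G A v u :=
  mem_comp_self (Finset.mem_erase.mpr ⟨huv.ne', huA⟩)

include hA hvA in
lemma glue_A1_subtree : IsSubtree G (insert v (comp G A v u)) := by
  refine isSubtree_of_walks_to_center (G := G) (v := v) (Finset.mem_insert_self _ _) ?_
  intro z hz
  rcases Finset.mem_insert.mp hz with rfl | hz
  · exact ⟨SimpleGraph.Walk.nil, by simp⟩
  · obtain ⟨p, hp⟩ := walk_to_of_isSubtree hA (Finset.mem_of_mem_erase (comp_subset hz)) hvA
    obtain ⟨q, hq⟩ := walk_stay (K := comp G A v u) (S := A) p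
      (fun b y hb hy hyv hadj => comp_closed' hb hy hyv hadj) hp (Or.inl hz)
    refine ⟨q, fun t ht => ?_⟩
    rcases (hq t ht).2 with h | rfl
    · exact Finset.mem_insert_of_mem h
    · exact Finset.mem_insert_self _ _

include hA hvA in
lemma glue_A2_subtree : IsSubtree G (A \ comp G A v u) := by
  have hv2 : v ∈ A \ comp G A v u := Finset.mem_sdiff.mpr ⟨hvA, hvCC⟩
  refine isSubtree_of_walks_to_center (G := G) (v := v) hv2 ?_
  intro z hz
  rw [Finset.mem_sdiff] at hz
  obtain ⟨p, hp⟩ := walk_to_of_isSubtree hA hz.1 hvA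
  obtain ⟨q, hq⟩ := walk_avoid (K := comp G A v u) (S := A) p hvCC
    (fun b y hb hy hyv hadj => comp_closed' hb hy hyv hadj) hp hz.2
  exact ⟨q, fun t ht => Finset.mem_sdiff.mpr ⟨(hq t ht).1, (hq t ht).2⟩⟩

include hA hvA in
lemma glue_inter_A1 {s : Finset V} (hs : s ∈ STat G A v) :
    s ∩ insert v (comp G A v u) ∈ STat G (insert v (comp G A v u)) v := by
  rw [mem_STat] at hs ⊢
  obtain ⟨hsA, hst, hvs⟩ := hs
  have hvint : v ∈ s ∩ insert v (comp G A v u) :=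
    Finset.mem_inter.mpr ⟨hvs, Finset.mem_insert_self _ _⟩
  refine ⟨Finset.inter_subset_right, ?_, hvint⟩
  refine isSubtree_of_walks_to_center (G := G) (v := v) hvint ?_
  intro z hz
  rw [Finset.mem_inter] at hz
  rcases Finset.mem_insert.mp hz.2 with rfl | hzc
  · exact ⟨SimpleGraph.Walk.nil, by simpa using hvint⟩
  · obtain ⟨p, hp⟩ := walk_to_of_isSubtree hst hz.1 hvs
    obtain ⟨q, hq⟩ := walk_stay (K := comp G A v u) (S := s) p
      (fun b y hb hy hyv hadj => comp_closed' hb (hsA hy) hyv hadj) hp (Or.inl hzc)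
    refine ⟨q, fun t ht => Finset.mem_inter.mpr ⟨(hq t ht).1, ?_⟩⟩
    rcases (hq t ht).2 with h | rfl
    · exact Finset.mem_insert_of_mem h
    · exact Finset.mem_insert_self _ _

include hA hvA in
lemma glue_inter_A2 {s : Finset V} (hs : s ∈ STat G A v) :
    s ∩ (A \ comp G A v u) ∈ STat G (A \ comp G A v u) v := by
  rw [mem_STat] at hs ⊢
  obtain ⟨hsA, hst, hvs⟩ := hs
  have hvint : v ∈ s ∩ (A \ comp G A v u) :=
    Finset.mem_inter.mpr ⟨hvs, Finset.mem_sdiff.mpr ⟨hvA, hvCC⟩⟩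
  refine ⟨Finset.inter_subset_right, ?_, hvint⟩
  refine isSubtree_of_walks_to_center (G := G) (v := v) hvint ?_
  intro z hz
  rw [Finset.mem_inter, Finset.mem_sdiff] at hz
  obtain ⟨p, hp⟩ := walk_to_of_isSubtree hst hz.1 hvs
  obtain ⟨q, hq⟩ := walk_avoid (K := comp G A v u) (S := s) p hvCC
    (fun b y hb hy hyv hadj => comp_closed' hb (hsA hy) hyv hadj) hp hz.2.2
  refine ⟨q, fun t ht => Finset.mem_inter.mpr ⟨(hq t ht).1,
    Finset.mem_sdiff.mpr ⟨hsA (hq t ht).1, (hq t ht).2⟩⟩⟩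

include hvA in
lemma glue_union {s₁ s₂ : Finset V}
    (h₁ : s₁ ∈ STat G (insert v (comp G A v u)) v) (h₂ : s₂ ∈ STat G (A \ comp G A v u) v) :
    s₁ ∪ s₂ ∈ STat G A v := by
  rw [mem_STat] at h₁ h₂ ⊢
  obtain ⟨h₁A, h₁t, h₁v⟩ := h₁
  obtain ⟨h₂A, h₂t, h₂v⟩ := h₂
  have hsub : s₁ ∪ s₂ ⊆ A := by
    intro x hx
    rcases Finset.mem_union.mp hx with hx | hx
    · rcases Finset.mem_insert.mp (h₁A hx) with rfl | hx'
      · exact hvA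
      · exact Finset.mem_of_mem_erase (comp_subset hx')
    · exact (Finset.mem_sdiff.mp (h₂A hx)).1
  refine ⟨hsub, ?_, Finset.mem_union_left _ h₁v⟩
  refine isSubtree_of_walks_to_center (G := G) (v := v) (Finset.mem_union_left _ h₁v) ?_
  intro z hz
  rcases Finset.mem_union.mp hz with hz | hz
  · obtain ⟨p, hp⟩ := walk_to_of_isSubtree h₁t hz h₁v
    exact ⟨p, fun t ht => Finset.mem_union_left _ (hp t ht)⟩
  · obtain ⟨p, hp⟩ := walk_to_of_isSubtree h₂t hz h₂v
    exact ⟨p, fun t ht => Finset.mem_union_right _ (hp t ht)⟩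

end GlueMain
end SubtreePf

namespace SubtreePf
open SimpleGraph Finset
open scoped Classical
variable {G : SimpleGraph V} [DecidableEq V]

section GlueCount

variable {A : Finset V} {v u : V}
  (hA : IsSubtree G A) (hvA : v ∈ A)

include hA hvA in
lemma glue_prod_counts :
    stNat G A v = stNat G (insert v (comp G A v u)) v * stNat G (A \ comp G A v u) v ∧
    stRat G A v + stNat G A v =
      stRat G (insert v (comp G A v u)) v * stNat G (A \ comp G A v u) v +
      stNat G (insert v (comp G A v u)) v * stRat G (A \ comp G A v u) v := by
  set A₁ := insert v (comp G A v u) with hA₁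
  set A₂ := A \ comp G A v u with hA₂
  have hI : A₁ ∩ A₂ = {v} := by
    ext z
    simp only [hA₁, hA₂, Finset.mem_inter, Finset.mem_insert, Finset.mem_sdiff,
      Finset.mem_singleton]
    constructor
    · rintro ⟨rfl | hz, _, hz2⟩
      · rfl
      · exact absurd hz hz2
    · rintro rfl
      exact ⟨Or.inl rfl, hvA, hvCC⟩
  have hU : ∀ s ∈ STat G A v, (s ∩ A₁) ∪ (s ∩ A₂) = s := by
    intro s hs
    rw [← Finset.inter_union_distrib_left]
    have : A₁ ∪ A₂ = A := by
      rw [hA₁, hA₂]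
      ext z
      simp only [Finset.mem_union, Finset.mem_insert, Finset.mem_sdiff]
      constructor
      · rintro ((rfl | hz) | ⟨hz, _⟩)
        · exact hvA
        · exact Finset.mem_of_mem_erase (comp_subset hz)
        · exact hz
      · intro hz
        by_cases hc : z ∈ comp G A v u
        · exact Or.inl (Or.inr hc)
        · exact Or.inr ⟨hz, hc⟩
    rw [this]
    exact Finset.inter_eq_left.mpr (mem_STat.mp hs).1
  have hRI : ∀ p ∈ STat G A₁ v ×ˢ STat G A₂ v,
      ((p.1 ∪ p.2) ∩ A₁, (p.1 ∪ p.2) ∩ A₂) = p := by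
    rintro ⟨s₁, s₂⟩ hp
    rw [Finset.mem_product] at hp
    obtain ⟨h₁, h₂⟩ := hp
    have h₁A : s₁ ⊆ A₁ := (mem_STat.mp h₁).1
    have h₂A : s₂ ⊆ A₂ := (mem_STat.mp h₂).1
    have h₁v : v ∈ s₁ := (mem_STat.mp h₁).2.2
    have h₂v : v ∈ s₂ := (mem_STat.mp h₂).2.2
    have e₁ : (s₁ ∪ s₂) ∩ A₁ = s₁ := by
      apply Finset.Subset.antisymm
      · intro z hz
        rw [Finset.mem_inter, Finset.mem_union] at hz
        rcases hz.1 with h | h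
        · exact h
        · have : z ∈ A₁ ∩ A₂ := Finset.mem_inter.mpr ⟨hz.2, h₂A h⟩
          rw [hI, Finset.mem_singleton] at this
          exact this ▸ h₁v
      · exact Finset.subset_inter Finset.subset_union_left h₁A
    have e₂ : (s₁ ∪ s₂) ∩ A₂ = s₂ := by
      apply Finset.Subset.antisymm
      · intro z hz
        rw [Finset.mem_inter, Finset.mem_union] at hz
        rcases hz.1 with h | h
        · have : z ∈ A₁ ∩ A₂ := Finset.mem_inter.mpr ⟨h₁A h, hz.2⟩
          rw [hI, Finset.mem_singleton] at this
          exact this ▸ h₂v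
        · exact h
      · exact Finset.subset_inter Finset.subset_union_right h₂A
    simp [e₁, e₂]
  constructor
  · rw [stNat, stNat, stNat, ← Finset.card_product]
    refine Finset.card_nbij' (fun s => (s ∩ A₁, s ∩ A₂)) (fun p => p.1 ∪ p.2) ?_ ?_ hU hRI
    · intro s hs
      rw [Finset.mem_coe, Finset.mem_product]
      exact ⟨glue_inter_A1 hA hvA hs, glue_inter_A2 hA hvA hs⟩
    · rintro ⟨s₁, s₂⟩ hp
      rw [Finset.mem_coe, Finset.mem_product] at hp
      exact glue_union hvA hp.1 hp.2
  · have hsum : ∑ s ∈ STat G A v, (s.card + 1) =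
        ∑ p ∈ STat G A₁ v ×ˢ STat G A₂ v, (p.1.card + p.2.card) := by
      refine Finset.sum_nbij' (fun s => (s ∩ A₁, s ∩ A₂)) (fun p => p.1 ∪ p.2) ?_ ?_ hU hRI ?_
      · intro s hs
        rw [Finset.mem_product]
        exact ⟨glue_inter_A1 hA hvA hs, glue_inter_A2 hA hvA hs⟩
      · rintro ⟨s₁, s₂⟩ hp
        rw [Finset.mem_product] at hp
        exact glue_union hvA hp.1 hp.2
      · intro s hs
        have hvs : v ∈ s := (mem_STat.mp hs).2.2
        have hinter : (s ∩ A₁) ∩ (s ∩ A₂) = {v} := by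
          rw [Finset.inter_inter_inter_comm, Finset.inter_self, hI]
          exact Finset.inter_eq_right.mpr (Finset.singleton_subset_iff.mpr hvs)
        have := Finset.card_union_add_card_inter (s ∩ A₁) (s ∩ A₂)
        rw [hU s hs, hinter, Finset.card_singleton] at this
        show s.card + 1 = (s ∩ A₁).card + (s ∩ A₂).card
        omega
    have h1 : ∑ s ∈ STat G A v, (s.card + 1) = stRat G A v + stNat G A v := by
      rw [Finset.sum_add_distrib]
      simp [stRat, stNat]
    have h2 : ∑ p ∈ STat G A₁ v ×ˢ STat G A₂ v, (p.1.card + p.2.card) =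
        stRat G A₁ v * stNat G A₂ v + stNat G A₁ v * stRat G A₂ v := by
      rw [Finset.sum_product]
      simp only [Finset.sum_add_distrib, Finset.sum_const, smul_eq_mul]
      rw [← Finset.mul_sum]
      simp only [stRat, stNat]
      ring
    rw [← h1, hsum, h2]

include hA hvA in
lemma glue_avoid_counts :
    stN G (A.erase v) = stN G ((insert v (comp G A v u)).erase v) +
      stN G ((A \ comp G A v u).erase v) ∧
    stR G (A.erase v) = stR G ((insert v (comp G A v u)).erase v) +
      stR G ((A \ comp G A v u).erase v) := by
  have he₁ : (insert v (comp G A v u)).erase v = comp G A v u :=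
    Finset.erase_insert hvCC
  have he₂ : (A \ comp G A v u).erase v = (A.erase v) \ comp G A v u := by
    ext z
    simp only [Finset.mem_erase, Finset.mem_sdiff]
    tauto
  have hsplit : ST G (A.erase v) = ST G (comp G A v u) ∪ ST G ((A.erase v) \ comp G A v u) := by
    ext s
    simp only [mem_ST, Finset.mem_union]
    constructor
    · rintro ⟨hsub, hst⟩
      by_cases hint : ∃ a, a ∈ s ∧ a ∈ comp G A v u
      · obtain ⟨a, has, hac⟩ := hint
        left
        refine ⟨?_, hst⟩
        intro b hbs
        obtain ⟨p, hp⟩ := walk_to_of_isSubtree hst has hbs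
        exact walk_in_closed (K := comp G A v u) (S := s)
          (fun b' y hb' hy hadj => comp_closed hb' (hsub hy) hadj) p hp hac
      · push_neg at hint
        right
        exact ⟨fun z hz => Finset.mem_sdiff.mpr ⟨hsub hz, hint z hz⟩, hst⟩
    · rintro (⟨hsub, hst⟩ | ⟨hsub, hst⟩)
      · exact ⟨hsub.trans comp_subset, hst⟩
      · exact ⟨hsub.trans Finset.sdiff_subset, hst⟩
  have hdisj : Disjoint (ST G (comp G A v u)) (ST G ((A.erase v) \ comp G A v u)) := by
    rw [Finset.disjoint_left]
    rintro s hs hs'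
    obtain ⟨a, ha⟩ := (mem_ST.mp hs).2.1
    have h1 := (mem_ST.mp hs).1 ha
    have h2 := (mem_ST.mp hs').1 ha
    exact (Finset.mem_sdiff.mp h2).2 h1
  constructor
  · rw [stN, hsplit, Finset.card_union_of_disjoint hdisj, he₁, he₂]; rfl
  · rw [stR, hsplit, Finset.sum_union hdisj, he₁, he₂]; rfl

end GlueCount
end SubtreePf

namespace SubtreePf
open SimpleGraph Finset
open scoped Classical
variable {G : SimpleGraph V} [DecidableEq V]

structure Good (n r na ra : ℤ) : Prop where
  hna1 : 1 ≤ na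
  hnan : na ≤ n
  hrar : ra ≤ r
  hA : 3 * (n * ra - na * r) ≥ n * (n - na)
  hB : 3 * r ≤ (na + 2) * n
  hC : 3 * ra ≤ na ^ 2 + na + n
  hD : 3 * ra ≥ na + 2 * n
  hE : n ≤ na ^ 2

lemma not_mem_comp (hac : G.IsAcyclic) {A : Finset V} {v u x : V}
    (huv : G.Adj v u) (hvx : G.Adj v x) (hxu : x ≠ u) : x ∉ comp G A v u := by
  intro hc
  rw [comp, Finset.mem_filter] at hc
  obtain ⟨hxe, p, hp⟩ := hc
  have hps := SimpleGraph.Walk.support_toPath_subset p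
  have hvq : v ∉ (p.toPath : G.Walk u x).support := fun h =>
    (Finset.mem_erase.mp (hp v (hps h))).1 rfl
  have hP2 : (SimpleGraph.Walk.cons huv (p.toPath : G.Walk u x)).IsPath :=
    SimpleGraph.Walk.IsPath.cons p.toPath.2 hvq
  have hequ := (SimpleGraph.isAcyclic_iff_path_unique.mp hac)
    ⟨SimpleGraph.Walk.cons huv (p.toPath : G.Walk u x), hP2⟩ (SimpleGraph.Path.singleton hvx)
  have hsup := congrArg (fun P : G.Path v x => (P : G.Walk v x).support) hequ
  simp only [SimpleGraph.Path.singleton, SimpleGraph.Walk.support_cons,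
    SimpleGraph.Walk.support_nil] at hsup
  have : (p.toPath : G.Walk u x).support = [x] :=
    List.cons_injective.eq_iff.mp hsup
  have h2 := SimpleGraph.Walk.support_eq_cons (p.toPath : G.Walk u x)
  rw [this] at h2
  exact hxu (List.head_eq_of_cons_eq h2.symm).symm

lemma erase_subtree_of_unique_nbr {A : Finset V} {v w : V}
    (hA : IsSubtree G A) (hvA : v ∈ A) (hw : w ∈ A.erase v)
    (huniq : ∀ x ∈ A, G.Adj v x → x = w) : IsSubtree G (A.erase v) := by
  refine isSubtree_of_walks_to_center (G := G) (v := w) hw ?_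
  intro z hz
  obtain ⟨p, hp⟩ := walk_to_of_isSubtree hA (Finset.mem_of_mem_erase hz) hvA
  obtain ⟨q, hq⟩ := walk_to_nbr (Finset.Subset.refl A) p huniq hp (Finset.ne_of_mem_erase hz)
  exact ⟨q, fun t ht => Finset.mem_erase.mpr ⟨(hq t ht).2, (hq t ht).1⟩⟩

lemma exists_nbr {A : Finset V} {v : V} (hA : IsSubtree G A) (hvA : v ∈ A)
    (hne : A ≠ {v}) : ∃ u ∈ A, G.Adj v u := by
  have : ∃ z ∈ A, z ≠ v := by
    by_contra hno
    push_neg at hno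
    exact hne (Finset.eq_singleton_iff_unique_mem.mpr ⟨hvA, fun x hx => hno x hx⟩)
  obtain ⟨z, hzA, hzv⟩ := this
  obtain ⟨p, hp⟩ := walk_to_of_isSubtree hA hvA hzA
  obtain ⟨b, hadj, p', rfl⟩ := SimpleGraph.Walk.exists_eq_cons_of_ne (Ne.symm hzv) p
  exact ⟨b, hp b (by simp), hadj⟩

end SubtreePf

namespace SubtreePf
open SimpleGraph Finset
open scoped Classical
variable {G : SimpleGraph V} [DecidableEq V]

lemma good_single : Good 1 1 1 1 := by constructor <;> norm_num

lemma good_leaf {n r na ra : ℤ} (h : Good n r na ra) :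
    Good (n + 1 + na) (r + 1 + ra + na) (1 + na) (1 + ra + na) := by
  obtain ⟨h1, h2, h3, hA, hB, hC, hD, hE⟩ := h
  constructor
  · linarith
  · linarith
  · linarith
  · nlinarith [hA, hB, hC, hD, hE, sq_nonneg (n - na), sq_nonneg na]
  · nlinarith [hA, hB, hC, hD, hE]
  · nlinarith [hA, hB, hC, hD, hE]
  · nlinarith [hA, hB, hC, hD, hE]
  · nlinarith [hA, hB, hC, hD, hE]

set_option maxHeartbeats 1000000 in
lemma good_glue {n' r' na' ra' n'' r'' na'' ra'' : ℤ}
    (h : Good n' r' na' ra') (g : Good n'' r'' na'' ra'') :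
    Good (na' * na'' + (n' - na') + (n'' - na''))
      (ra' * na'' + na' * ra'' - na' * na'' + (r' - ra') + (r'' - ra''))
      (na' * na'') (ra' * na'' + na' * ra'' - na' * na'') := by
  obtain ⟨h1, h2, h3, hA, hB, hC, hD, hE⟩ := h
  obtain ⟨g1, g2, g3, gA, gB, gC, gD, gE⟩ := g
  set x := na'; set y := na''
  have hp : 0 ≤ n' - x := by linarith
  have hq : 0 ≤ n'' - y := by linarith
  have hx0 : (0:ℤ) ≤ x := by linarith
  have hy0 : (0:ℤ) ≤ y := by linarith
  have hx1 : (0:ℤ) ≤ x - 1 := by linarith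
  have hy1 : (0:ℤ) ≤ y - 1 := by linarith
  have hpE : n' - x ≤ x * (x - 1) := by nlinarith [hE]
  have hqE : n'' - y ≤ y * (y - 1) := by nlinarith [gE]
  have ht0 : (0:ℤ) ≤ (x - 1) * (y - 1) := mul_nonneg hx1 hy1
  have ht : 0 ≤ ((x - 1) * (y - 1)) * ((x - 1) * (y - 1) - 1) := by
    rcases lt_or_eq_of_le ht0 with hpos | heq
    · have : 1 ≤ (x - 1) * (y - 1) := hpos
      nlinarith
    · nlinarith
  constructor
  · nlinarith
  · nlinarith
  · linarith
  · have k1 : 3 * (n' * ra' - x * r') * y ≥ n' * (n' - x) * y :=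
      mul_le_mul_of_nonneg_right hA hy0
    have k2 : 3 * (n'' * ra'' - y * r'') * x ≥ n'' * (n'' - y) * x :=
      mul_le_mul_of_nonneg_right gA hx0
    have k3 : 3 * ra' * (y * (n'' - y)) ≥ (x + 2 * n') * (y * (n'' - y)) :=
      mul_le_mul_of_nonneg_right hD (mul_nonneg hy0 hq)
    have k4 : 3 * ra'' * (x * (n' - x)) ≥ (y + 2 * n'') * (x * (n' - x)) :=
      mul_le_mul_of_nonneg_right gD (mul_nonneg hx0 hp)
    have k5 : (y - 1) * ((n' - x) * (n' - x)) ≥ 0 := mul_nonneg hy1 (mul_nonneg hp hp)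
    have k6 : (x - 1) * ((n'' - y) * (n'' - y)) ≥ 0 := mul_nonneg hx1 (mul_nonneg hq hq)
    have k7 : (n' - x) * (n'' - y) * (x + y - 1) ≥ 0 :=
      mul_nonneg (mul_nonneg hp hq) (by linarith)
    nlinarith [k1, k2, k3, k4, k5, k6, k7]
  · have k1 : 3 * ra' * (y - 1) ≤ (x ^ 2 + x + n') * (y - 1) :=
      mul_le_mul_of_nonneg_right hC hy1
    have k2 : 3 * ra'' * (x - 1) ≤ (y ^ 2 + y + n'') * (x - 1) :=
      mul_le_mul_of_nonneg_right gC hx1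
    have k3 : 0 ≤ x * y * ((x - 1) * (y - 1)) :=
      mul_nonneg (mul_nonneg hx0 hy0) (mul_nonneg hx1 hy1)
    have k4 : 0 ≤ (x - 1) * (y - 1) * (n' - x) := mul_nonneg (mul_nonneg hx1 hy1) hp
    have k5 : 0 ≤ (x - 1) * (y - 1) * (n'' - y) := mul_nonneg (mul_nonneg hx1 hy1) hq
    nlinarith [k1, k2, k3, k4, k5, hB, gB]
  · have k1 : 3 * ra' * y ≤ (x ^ 2 + x + n') * y := mul_le_mul_of_nonneg_right hC hy0
    have k2 : 3 * ra'' * x ≤ (y ^ 2 + y + n'') * x := mul_le_mul_of_nonneg_right gC hx0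
    have k3 : (n' - x) * (y - 1) ≤ x * (x - 1) * (y - 1) := mul_le_mul_of_nonneg_right hpE hy1
    have k4 : (n'' - y) * (x - 1) ≤ y * (y - 1) * (x - 1) := mul_le_mul_of_nonneg_right hqE hx1
    nlinarith [k1, k2, k3, k4, ht]
  · have k1 : 3 * ra' * y ≥ (x + 2 * n') * y := mul_le_mul_of_nonneg_right hD hy0
    have k2 : 3 * ra'' * x ≥ (y + 2 * n'') * x := mul_le_mul_of_nonneg_right gD hx0
    nlinarith [k1, k2, mul_nonneg hp hy1, mul_nonneg hq hx1]
  · have k5 : 0 ≤ (x + y + x * y) * ((x - 1) * (y - 1)) := mul_nonneg (by nlinarith) ht0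
    nlinarith [hpE, hqE, k5]

/-- The main induction. -/
lemma key (hac : G.IsAcyclic) :
    ∀ A : Finset V, IsSubtree G A → ∀ v ∈ A,
      Good (stN G A : ℤ) (stR G A : ℤ) (stNat G A v : ℤ) (stRat G A v : ℤ) := by
  intro A
  induction A using Finset.strongInduction with
  | _ A ih =>
    intro hA v hv
    by_cases hsing : A = {v}
    · subst hsing
      have h1 : stN G {v} = 1 := by rw [stN, ST_singleton v (isSubtree_singleton v)]; rfl
      have h2 : stR G {v} = 1 := by
        rw [stR, ST_singleton v (isSubtree_singleton v)]; simp
      have h3 : stNat G {v} v = 1 := by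
        rw [stNat, STat_singleton v (isSubtree_singleton v)]; rfl
      have h4 : stRat G {v} v = 1 := by
        rw [stRat, STat_singleton v (isSubtree_singleton v)]; simp
      rw [h1, h2, h3, h4]
      exact good_single
    · obtain ⟨u, huA, huv⟩ := exists_nbr hA hv hsing
      by_cases hD : ∀ x ∈ A, G.Adj v x → x = u
      · -- LEAF case
        have hue : u ∈ A.erase v := Finset.mem_erase.mpr ⟨huv.ne', huA⟩
        have hA' : IsSubtree G (A.erase v) := erase_subtree_of_unique_nbr hA hv hue hD
        have hss : A.erase v ⊂ A := Finset.erase_ssubset hv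
        have IH := ih (A.erase v) hss hA' u hue
        obtain ⟨eN, eR⟩ := leaf_counts hv hue huv hD
        have sN := stN_split (G := G) A v
        have sR := stR_split (G := G) A v
        have e1 : (stN G A : ℤ) = (stN G (A.erase v) : ℤ) + 1 + stNat G (A.erase v) u := by
          push_cast [sN, eN]; ring
        have e2 : (stR G A : ℤ) = (stR G (A.erase v) : ℤ) + 1 + stRat G (A.erase v) u
            + stNat G (A.erase v) u := by
          push_cast [sR, eR]; ring
        have e3 : (stNat G A v : ℤ) = 1 + stNat G (A.erase v) u := by push_cast [eN]; ring
        have e4 : (stRat G A v : ℤ) = 1 + stRat G (A.erase v) u + stNat G (A.erase v) u := by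
          push_cast [eR]; ring
        rw [e1, e2, e3, e4]
        exact good_leaf IH
      · -- GLUE case
        push_neg at hD
        obtain ⟨x, hxA, hvx, hxu⟩ := hD
        set A₁ := insert v (comp G A v u) with hA₁def
        set A₂ := A \ comp G A v u with hA₂def
        have hxnc : x ∉ comp G A v u := not_mem_comp hac huv hvx hxu
        have hA₁sub : A₁ ⊆ A := by
          intro z hz
          rcases Finset.mem_insert.mp hz with rfl | hz
          · exact hv
          · exact Finset.mem_of_mem_erase (comp_subset hz)
        have hss₁ : A₁ ⊂ A := by
          refine Finset.ssubset_iff_of_subset hA₁sub |>.mpr ⟨x, hxA, ?_⟩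
          intro hc
          rcases Finset.mem_insert.mp hc with rfl | hc
          · exact G.loopless.irrefl x hvx
          · exact hxnc hc
        have huCC' : u ∈ comp G A v u := huCC hv huA huv
        have hss₂ : A₂ ⊂ A := by
          refine Finset.ssubset_iff_of_subset Finset.sdiff_subset |>.mpr ⟨u, huA, ?_⟩
          intro hc
          exact (Finset.mem_sdiff.mp hc).2 huCC'
        have hA₁t : IsSubtree G A₁ := glue_A1_subtree hA hv
        have hA₂t : IsSubtree G A₂ := glue_A2_subtree hA hv
        have hv₁ : v ∈ A₁ := Finset.mem_insert_self _ _
        have hv₂ : v ∈ A₂ := Finset.mem_sdiff.mpr ⟨hv, hvCC⟩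
        have IH₁ := ih A₁ hss₁ hA₁t v hv₁
        have IH₂ := ih A₂ hss₂ hA₂t v hv₂
        obtain ⟨pN, pR⟩ := glue_prod_counts (u := u) hA hv
        obtain ⟨aN, aR⟩ := glue_avoid_counts (u := u) hA hv
        have sN := stN_split (G := G) A v
        have sR := stR_split (G := G) A v
        have sN₁ := stN_split (G := G) A₁ v
        have sR₁ := stR_split (G := G) A₁ v
        have sN₂ := stN_split (G := G) A₂ v
        have sR₂ := stR_split (G := G) A₂ v
        have e3 : (stNat G A v : ℤ) = (stNat G A₁ v : ℤ) * stNat G A₂ v := by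
          push_cast [pN]; ring
        have e4 : (stRat G A v : ℤ) = (stRat G A₁ v : ℤ) * stNat G A₂ v
            + (stNat G A₁ v : ℤ) * stRat G A₂ v - (stNat G A₁ v : ℤ) * stNat G A₂ v := by
          have := congrArg (fun t : ℕ => (t : ℤ)) pR
          push_cast at this
          have e3' := e3
          push_cast at e3'
          linarith
        have e1 : (stN G A : ℤ) = (stNat G A₁ v : ℤ) * stNat G A₂ v
            + ((stN G A₁ : ℤ) - stNat G A₁ v) + ((stN G A₂ : ℤ) - stNat G A₂ v) := by
          have c1 := congrArg (fun t : ℕ => (t : ℤ)) sN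
          have c2 := congrArg (fun t : ℕ => (t : ℤ)) aN
          have c3 := congrArg (fun t : ℕ => (t : ℤ)) sN₁
          have c4 := congrArg (fun t : ℕ => (t : ℤ)) sN₂
          push_cast at c1 c2 c3 c4
          have e3' := e3
          linarith
        have e2 : (stR G A : ℤ) = (stRat G A₁ v : ℤ) * stNat G A₂ v
            + (stNat G A₁ v : ℤ) * stRat G A₂ v - (stNat G A₁ v : ℤ) * stNat G A₂ v
            + ((stR G A₁ : ℤ) - stRat G A₁ v) + ((stR G A₂ : ℤ) - stRat G A₂ v) := by
          have c1 := congrArg (fun t : ℕ => (t : ℤ)) sR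
          have c2 := congrArg (fun t : ℕ => (t : ℤ)) aR
          have c3 := congrArg (fun t : ℕ => (t : ℤ)) sR₁
          have c4 := congrArg (fun t : ℕ => (t : ℤ)) sR₂
          push_cast at c1 c2 c3 c4
          linarith
        rw [e1, e2, e3, e4]
        exact good_glue IH₁ IH₂

end SubtreePf


/-- for any tree `T` and vertex `v`,
`3(N_T R_v − N_v R_T) ≥ N_T² − N_v N_T`. -/
theorem three_mul_NR_sub_NR_ge
    [Fintype V] (G : SimpleGraph V) (hT : G.IsTree) (v : V) :
    3 * ((numSubtrees G : ℤ) * sumSubtreesAt G v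
        - (numSubtreesAt G v : ℤ) * sumSubtrees G) ≥
      (numSubtrees G : ℤ) ^ 2 - (numSubtreesAt G v : ℤ) * numSubtrees G := by
  classical
  have hconn := hT.isConnected
  haveI : Nonempty V := hconn.nonempty
  have hUt : IsSubtree G (Finset.univ : Finset V) := by
    rw [SubtreePf.isSubtree_iff]
    refine ⟨Finset.univ_nonempty, fun x _ y _ => ?_⟩
    obtain ⟨p⟩ := hconn.preconnected x y
    exact ⟨p, fun z _ => Finset.mem_univ z⟩
  have hgood := SubtreePf.key hT.IsAcyclic Finset.univ hUt v (Finset.mem_univ v)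
  have q1 : SubtreePf.stN G Finset.univ = numSubtrees G := by
    rw [SubtreePf.stN, SubtreePf.ST, Finset.powerset_univ, numSubtrees]
  have q2 : SubtreePf.stR G Finset.univ = sumSubtrees G := by
    rw [SubtreePf.stR, SubtreePf.ST, Finset.powerset_univ, sumSubtrees]
  have q3 : SubtreePf.stNat G Finset.univ v = numSubtreesAt G v := by
    rw [SubtreePf.stNat, SubtreePf.STat, Finset.powerset_univ, numSubtreesAt]
  have q4 : SubtreePf.stRat G Finset.univ v = sumSubtreesAt G v := by
    rw [SubtreePf.stRat, SubtreePf.STat, Finset.powerset_univ, sumSubtreesAt]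
  rw [q1, q2, q3, q4] at hgood
  nlinarith [hgood.hA]
end

section
/- Let T be a finite tree with at least two vertices and v a vertex of T. Then the mean subtree order of the forest T − v obtained by deleting v satisfies μ_{T−v} = (R_T − R_v)/(N_T − N_v) ≤ (N_v + 1)/3. -/
variable {V : Type*}

namespace MyAux

open Finset

open SimpleGraph Walk

/-- Project a walk in an induced subgraph to the ambient graph. -/
lemma walk_of_induce {G : SimpleGraph V} {t : Set V} {a b : t}
    (w : (G.induce t).Walk a b) :
    ∃ p : G.Walk a.1 b.1, ∀ c ∈ p.support, c ∈ t := by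
  induction w with
  | nil => exact ⟨SimpleGraph.Walk.nil, by simp [Subtype.coe_prop]⟩
  | @cons x y z h w ih =>
    obtain ⟨p, hp⟩ := ih
    refine ⟨SimpleGraph.Walk.cons (by exact h) p, ?_⟩
    intro c hc
    change c ∈ x.1 :: p.support at hc
    rcases List.mem_cons.mp hc with rfl | hc
    · exact x.2
    · exact hp c hc

/-- Lift a walk with support inside `t` to the induced subgraph. -/
lemma walk_to_induce {G : SimpleGraph V} {t : Set V} {a b : V}
    (w : G.Walk a b) (hw : ∀ c ∈ w.support, c ∈ t) :
    Nonempty ((G.induce t).Walk ⟨a, hw a w.start_mem_support⟩ ⟨b, hw b w.end_mem_support⟩) := by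
  induction w with
  | nil => exact ⟨SimpleGraph.Walk.nil⟩
  | @cons x y z h w ih =>
    have hy : y ∈ t := hw y (by simp)
    obtain ⟨p⟩ := ih (fun c hc => hw c (by simp [hc]))
    exact ⟨SimpleGraph.Walk.cons (by exact h) p⟩

lemma induce_connected_of_walks {G : SimpleGraph V} {t : Set V} (hne : t.Nonempty)
    (h : ∀ a ∈ t, ∀ b ∈ t, ∃ p : G.Walk a b, ∀ c ∈ p.support, c ∈ t) :
    (G.induce t).Connected := by
  have : Nonempty t := hne.to_subtype
  refine ⟨fun a b => ?_⟩
  obtain ⟨p, hp⟩ := h a.1 a.2 b.1 b.2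
  obtain ⟨w⟩ := walk_to_induce p hp
  exact ⟨w.copy (by simp) (by simp)⟩

lemma connected_walk [DecidableEq V] {G : SimpleGraph V} {t : Set V} (ht : (G.induce t).Connected)
    {a b : V} (ha : a ∈ t) (hb : b ∈ t) :
    ∃ p : G.Walk a b, p.IsPath ∧ ∀ c ∈ p.support, c ∈ t := by
  obtain ⟨w⟩ := ht ⟨a, ha⟩ ⟨b, hb⟩
  obtain ⟨p, hp⟩ := walk_of_induce w
  exact ⟨p.bypass, p.bypass_isPath, fun c hc => hp c (p.support_bypass_subset hc)⟩

lemma singleton_subtree [DecidableEq V] (G : SimpleGraph V) (u : V) : IsSubtree G {u} := by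
  refine ⟨⟨u, mem_singleton_self u⟩, ?_⟩
  apply induce_connected_of_walks (by simp)
  intro a ha b hb
  simp only [coe_singleton, Set.mem_singleton_iff] at ha hb
  subst ha; subst hb
  exact ⟨SimpleGraph.Walk.nil, by simp⟩

section ZSide

variable (G : SimpleGraph V) (u z : V)

/-- the set of vertices reachable from `z` without passing through `u`. -/
def ZS (x : V) : Prop := ∃ w : G.Walk z x, u ∉ w.support

variable {G u z}

lemma ZS_z (huz : G.Adj u z) : ZS G u z z :=
  ⟨SimpleGraph.Walk.nil, by simp [huz.ne]⟩

lemma not_ZS_u : ¬ ZS G u z u := by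
  rintro ⟨w, hw⟩
  exact hw w.end_mem_support

lemma ZS_extend {x y : V} (hx : ZS G u z x) (w : G.Walk x y) (hw : u ∉ w.support) :
    ZS G u z y := by
  obtain ⟨p, hp⟩ := hx
  exact ⟨p.append w, by simp [hp, hw]⟩

lemma crossing {x y : V} (hx : ¬ ZS G u z x) (w : G.Walk x y) (hy : ZS G u z y) :
    u ∈ w.support := by
  by_contra hu
  exact hx (ZS_extend hy w.reverse (by simpa using hu))

/-- In a tree, the only neighbor of `u` on the `z`-side is `z` itself. -/
lemma ZS_adj_eq [DecidableEq V] (hT : G.IsTree) (huz : G.Adj u z) {y : V}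
    (hy : ZS G u z y) (hadj : G.Adj u y) : y = z := by
  by_contra hne
  obtain ⟨w, hw⟩ := hy
  have hzy : z ≠ y := fun h => hne h.symm
  have huniq := SimpleGraph.isAcyclic_iff_path_unique.mp hT.IsAcyclic
  have hp1 : (SimpleGraph.Walk.cons hadj SimpleGraph.Walk.nil).IsPath := by
    simp [SimpleGraph.Walk.isPath_def, hadj.ne]
  have hup : u ∉ w.bypass.support := fun h => hw (w.support_bypass_subset h)
  have hp2 : (SimpleGraph.Walk.cons huz w.bypass).IsPath :=
    SimpleGraph.Walk.IsPath.cons w.bypass_isPath hup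
  have := huniq ⟨_, hp1⟩ ⟨_, hp2⟩
  have hval : (SimpleGraph.Walk.cons hadj (SimpleGraph.Walk.nil : G.Walk y y))
      = SimpleGraph.Walk.cons huz w.bypass := congrArg Subtype.val this
  have hsup : (SimpleGraph.Walk.cons hadj (SimpleGraph.Walk.nil : G.Walk y y)).support
      = (SimpleGraph.Walk.cons huz w.bypass).support := by rw [hval]
  rw [SimpleGraph.Walk.support_cons, SimpleGraph.Walk.support_cons,
    SimpleGraph.Walk.support_nil] at hsup
  have h2 := List.tail_eq_of_cons_eq hsup
  rw [w.bypass.support_eq_cons] at h2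
  exact hzy (List.head_eq_of_cons_eq h2.symm)

end ZSide

section Structure

attribute [local instance] Classical.propDecidable

variable {G : SimpleGraph V} {u z : V}

lemma last_step {a : V} (p : G.Walk a u) (hp : p.IsPath) (hne : a ≠ u) :
    ∃ (y : V) (_ : G.Adj u y) (q : G.Walk y a), u ∉ q.support ∧ ∀ c ∈ q.support, c ∈ p.support := by
  obtain ⟨y, h, q, hq⟩ := SimpleGraph.Walk.exists_eq_cons_of_ne (Ne.symm hne) p.reverse
  have hrp : p.reverse.IsPath := hp.reverse
  rw [hq] at hrp
  have hu : u ∉ q.support := ((SimpleGraph.Walk.cons_isPath_iff h q).mp hrp).2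
  refine ⟨y, h, q, hu, fun c hc => ?_⟩
  have hc2 : c ∈ p.reverse.support := by
    rw [hq, SimpleGraph.Walk.support_cons]
    exact List.mem_cons_of_mem _ hc
  rwa [SimpleGraph.Walk.support_reverse, List.mem_reverse] at hc2

/-- within a subtree containing two z-side vertices, there is a walk staying on the z-side. -/
lemma walk_in_ZS (hT : G.IsTree) (huz : G.Adj u z) {s : Finset V}
    (hconn : (G.induce (↑s : Set V)).Connected)
    {x y : V} (hx : x ∈ s) (hy : y ∈ s) (hzx : ZS G u z x) (hzy : ZS G u z y) :
    ∃ p : G.Walk x y, ∀ c ∈ p.support, c ∈ s ∧ ZS G u z c := by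
  classical
  obtain ⟨p, hpath, hps⟩ := connected_walk hconn hx hy
  have hu : u ∉ p.support := by
    intro hu
    have hxu : x ≠ u := fun h => not_ZS_u (h ▸ hzx)
    have hyu : y ≠ u := fun h => not_ZS_u (h ▸ hzy)
    set p1 := p.takeUntil u hu with hp1def
    set p2 := p.dropUntil u hu with hp2def
    obtain ⟨y1, h1, q1, hq1u, hq1sub⟩ := last_step p1 (hpath.takeUntil hu) hxu
    have hy1 : ZS G u z y1 := ZS_extend hzx q1.reverse (by
      rwa [SimpleGraph.Walk.support_reverse, List.mem_reverse])
    have hy1z : y1 = z := ZS_adj_eq hT huz hy1 h1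
    obtain ⟨y2, h2, q2, hq2⟩ := SimpleGraph.Walk.exists_eq_cons_of_ne (Ne.symm hyu) p2
    have hp2path : p2.IsPath := hpath.dropUntil hu
    have hq2path := hp2path
    rw [hq2] at hq2path
    have hq2u : u ∉ q2.support := ((SimpleGraph.Walk.cons_isPath_iff h2 q2).mp hq2path).2
    have hy2 : ZS G u z y2 := ZS_extend hzy q2.reverse (by
      rwa [SimpleGraph.Walk.support_reverse, List.mem_reverse])
    have hy2z : y2 = z := ZS_adj_eq hT huz hy2 h2
    have hnodup := hpath.support_nodup
    rw [← p.take_spec hu, SimpleGraph.Walk.support_append] at hnodup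
    have hz1 : z ∈ p1.support := hy1z ▸ hq1sub y1 q1.start_mem_support
    have hz2 : z ∈ p2.support.tail := by
      rw [hq2, SimpleGraph.Walk.support_cons]
      exact hy2z ▸ q2.start_mem_support
    exact List.disjoint_of_nodup_append hnodup hz1 hz2
  refine ⟨p, fun c hc => ⟨hps c hc, ?_⟩⟩
  exact ZS_extend hzx (p.takeUntil c hc)
    (fun h => hu (p.support_takeUntil_subset hc h))

/-- within a subtree containing two non-z-side vertices, there is a walk staying off the z-side. -/
lemma walk_out_ZS {s : Finset V}
    (hconn : (G.induce (↑s : Set V)).Connected)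
    {x y : V} (hx : x ∈ s) (hy : y ∈ s) (hzx : ¬ ZS G u z x) (hzy : ¬ ZS G u z y) :
    ∃ p : G.Walk x y, ∀ c ∈ p.support, c ∈ s ∧ ¬ ZS G u z c := by
  classical
  obtain ⟨p, hpath, hps⟩ := connected_walk hconn hx hy
  refine ⟨p, fun c hc => ⟨hps c hc, fun hzc => ?_⟩⟩
  set p1 := p.takeUntil c hc with hp1def
  set p2 := p.dropUntil c hc with hp2def
  have hu1 : u ∈ p1.support := crossing hzx p1 hzc
  have hu2 : u ∈ p2.support := by
    have := crossing hzy p2.reverse hzc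
    rwa [SimpleGraph.Walk.support_reverse, List.mem_reverse] at this
  have hnodup := hpath.support_nodup
  rw [← p.take_spec hc, SimpleGraph.Walk.support_append] at hnodup
  rcases (List.mem_cons.mp (by rwa [← p2.support_eq_cons] : u ∈ c :: p2.support.tail)) with h | h
  · exact not_ZS_u (h ▸ hzc)
  · exact List.disjoint_of_nodup_append hnodup hu1 h

/-- a subtree avoiding `u` lies entirely on one side. -/
lemma subtree_side (huz : G.Adj u z) {s : Finset V} (hs : IsSubtree G s) (hus : u ∉ s) :
    (∀ c ∈ s, ZS G u z c) ∨ (∀ c ∈ s, ¬ ZS G u z c) := by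
  by_contra hcon
  push_neg at hcon
  obtain ⟨⟨x, hx, hzx⟩, y, hy, hzy⟩ := hcon
  obtain ⟨p, _, hps⟩ := connected_walk hs.2 hx hy
  exact hus (hps u (crossing hzx p hzy))

/-- a subtree containing `u` and a z-side vertex contains `z`. -/
lemma subtree_mem_z (hT : G.IsTree) (huz : G.Adj u z) {s : Finset V} (hs : IsSubtree G s)
    (hus : u ∈ s) {x : V} (hx : x ∈ s) (hzx : ZS G u z x) : z ∈ s := by
  obtain ⟨p, hpath, hps⟩ := connected_walk hs.2 hx hus
  have hxu : x ≠ u := fun h => not_ZS_u (h ▸ hzx)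
  obtain ⟨y1, h1, q1, hq1u, hq1sub⟩ := last_step p hpath hxu
  have hy1 : ZS G u z y1 := ZS_extend hzx q1.reverse (by
    rwa [SimpleGraph.Walk.support_reverse, List.mem_reverse])
  have hy1z : y1 = z := ZS_adj_eq hT huz hy1 h1
  exact hps z (hy1z ▸ hq1sub y1 q1.start_mem_support)

/-- gluing two subtrees through the edge `u z`. -/
lemma subtree_glue (huz : G.Adj u z) {t1 t2 : Finset V} (h1 : IsSubtree G t1)
    (h2 : IsSubtree G t2) (hu : u ∈ t1) (hz : z ∈ t2) : IsSubtree G (t1 ∪ t2) := by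
  classical
  have key : ∀ c ∈ t1 ∪ t2, ∃ p : G.Walk c u, ∀ d ∈ p.support, d ∈ t1 ∪ t2 := by
    intro c hc
    rcases mem_union.mp hc with h | h
    · obtain ⟨p, _, hps⟩ := connected_walk h1.2 h hu
      exact ⟨p, fun d hd => mem_union_left _ (hps d hd)⟩
    · obtain ⟨p, _, hps⟩ := connected_walk h2.2 h hz
      refine ⟨p.append (SimpleGraph.Walk.cons huz.symm SimpleGraph.Walk.nil), fun d hd => ?_⟩
      rw [SimpleGraph.Walk.mem_support_append_iff] at hd
      rcases hd with hd | hd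
      · exact mem_union_right _ (hps d hd)
      · rw [SimpleGraph.Walk.support_cons, SimpleGraph.Walk.support_nil] at hd
        rcases List.mem_cons.mp hd with rfl | hd
        · exact mem_union_right _ hz
        · rcases List.mem_singleton.mp hd with rfl
          exact mem_union_left _ hu
  refine ⟨⟨u, mem_union_left _ hu⟩, induce_connected_of_walks ⟨u, by simp [hu]⟩ ?_⟩
  intro a ha b hb
  simp only [coe_union, Set.mem_union, mem_coe] at ha hb
  obtain ⟨p, hp⟩ := key a (by rcases ha with h|h; exacts [mem_union_left _ h, mem_union_right _ h])
  obtain ⟨q, hq⟩ := key b (by rcases hb with h|h; exacts [mem_union_left _ h, mem_union_right _ h])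
  refine ⟨p.append q.reverse, fun c hcc => ?_⟩
  rw [SimpleGraph.Walk.mem_support_append_iff] at hcc
  rcases hcc with h | h
  · simpa using hp c h
  · rw [SimpleGraph.Walk.support_reverse, List.mem_reverse] at h
    simpa using hq c h

end Structure

section Counting

attribute [local instance] Classical.propDecidable

variable [Fintype V] (G : SimpleGraph V)

/-- subtrees inside `A`. -/
noncomputable def ST (A : Finset V) : Finset (Finset V) :=
  univ.filter (fun s => IsSubtree G s ∧ s ⊆ A)

/-- subtrees inside `A` containing `u`. -/
noncomputable def STat (A : Finset V) (u : V) : Finset (Finset V) :=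
  univ.filter (fun s => IsSubtree G s ∧ s ⊆ A ∧ u ∈ s)

/-- subtrees inside `A` avoiding `u`. -/
noncomputable def STn (A : Finset V) (u : V) : Finset (Finset V) :=
  univ.filter (fun s => IsSubtree G s ∧ s ⊆ A ∧ u ∉ s)

variable {G}

lemma mem_ST {A s : Finset V} : s ∈ ST G A ↔ IsSubtree G s ∧ s ⊆ A := by
  simp [ST]

lemma mem_STat {A s : Finset V} {u : V} :
    s ∈ STat G A u ↔ IsSubtree G s ∧ s ⊆ A ∧ u ∈ s := by
  simp [STat]

lemma mem_STn {A s : Finset V} {u : V} :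
    s ∈ STn G A u ↔ IsSubtree G s ∧ s ⊆ A ∧ u ∉ s := by
  simp [STn]

lemma STat_eq_filter {A : Finset V} {u : V} :
    STat G A u = (ST G A).filter (fun s => u ∈ s) := by
  ext s; simp [mem_STat, mem_ST, Finset.mem_filter, and_assoc]

lemma STn_eq_filter {A : Finset V} {u : V} :
    STn G A u = (ST G A).filter (fun s => u ∉ s) := by
  ext s; simp [mem_STn, mem_ST, Finset.mem_filter, and_assoc]

lemma cnt_split (A : Finset V) (u : V) :
    (ST G A).card = (STat G A u).card + (STn G A u).card := by
  rw [STat_eq_filter, STn_eq_filter]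
  exact (Finset.card_filter_add_card_filter_not _).symm

lemma sum_split (A : Finset V) (u : V) :
    ∑ s ∈ ST G A, s.card = (∑ s ∈ STat G A u, s.card) + ∑ s ∈ STn G A u, s.card := by
  rw [STat_eq_filter, STn_eq_filter]
  exact (Finset.sum_filter_add_sum_filter_not _ _ _).symm

lemma ST_singleton (u : V) : ST G {u} = {{u}} := by
  ext s
  simp only [mem_ST, Finset.mem_singleton]
  constructor
  · rintro ⟨⟨hne, -⟩, hsub⟩
    rcases Finset.subset_singleton_iff.mp hsub with rfl | rfl
    · exact absurd hne (by simp)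
    · rfl
  · rintro rfl
    exact ⟨singleton_subtree G u, le_refl _⟩

lemma STat_singleton (u : V) : STat G {u} u = {{u}} := by
  ext s
  simp only [mem_STat, Finset.mem_singleton]
  constructor
  · rintro ⟨⟨hne, -⟩, hsub, -⟩
    rcases Finset.subset_singleton_iff.mp hsub with rfl | rfl
    · exact absurd hne (by simp)
    · rfl
  · rintro rfl
    exact ⟨singleton_subtree G u, le_refl _, Finset.mem_singleton_self u⟩

lemma singleton_mem_STat {A : Finset V} {u : V} (hu : u ∈ A) : {u} ∈ STat G A u := by
  rw [mem_STat]
  exact ⟨singleton_subtree G u, by simpa, Finset.mem_singleton_self u⟩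

section Decomp

variable {u z : V} (A : Finset V)

/-- the `z`-side part of `A`. -/
noncomputable def Zf (G : SimpleGraph V) (u z : V) (A : Finset V) : Finset V :=
  A.filter (fun x => ZS G u z x)

/-- the `u`-side part of `A`. -/
noncomputable def Af (G : SimpleGraph V) (u z : V) (A : Finset V) : Finset V :=
  A.filter (fun x => ¬ ZS G u z x)

variable {A}

lemma Zf_subset : Zf G u z A ⊆ A := Finset.filter_subset _ _
lemma Af_subset : Af G u z A ⊆ A := Finset.filter_subset _ _

lemma mem_Zf {x : V} : x ∈ Zf G u z A ↔ x ∈ A ∧ ZS G u z x := Finset.mem_filter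
lemma mem_Af {x : V} : x ∈ Af G u z A ↔ x ∈ A ∧ ¬ ZS G u z x := Finset.mem_filter

lemma u_mem_Af (hu : u ∈ A) : u ∈ Af G u z A :=
  mem_Af.mpr ⟨hu, not_ZS_u⟩

lemma z_mem_Zf (huz : G.Adj u z) (hz : z ∈ A) : z ∈ Zf G u z A :=
  mem_Zf.mpr ⟨hz, ZS_z huz⟩

lemma Af_ssubset (huz : G.Adj u z) (hz : z ∈ A) : Af G u z A ⊂ A :=
  Finset.ssubset_iff_of_subset (Af_subset) |>.mpr
    ⟨z, hz, fun h => (mem_Af.mp h).2 (ZS_z huz)⟩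

lemma Zf_ssubset (hu : u ∈ A) : Zf G u z A ⊂ A :=
  Finset.ssubset_iff_of_subset (Zf_subset) |>.mpr
    ⟨u, hu, fun h => not_ZS_u (mem_Zf.mp h).2⟩

lemma Af_connected (huz : G.Adj u z) (hA : (G.induce (↑A : Set V)).Connected) (hu : u ∈ A) :
    (G.induce (↑(Af G u z A) : Set V)).Connected := by
  apply induce_connected_of_walks ⟨u, by simpa using u_mem_Af hu⟩
  intro a ha b hb
  simp only [Finset.coe_filter, Set.mem_setOf_eq, Af, Finset.mem_coe] at ha hb
  obtain ⟨p, hp⟩ := walk_out_ZS hA ha.1 hb.1 ha.2 hb.2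
  exact ⟨p, fun c hc => by simpa [Af, Finset.coe_filter] using hp c hc⟩

lemma Zf_connected (hT : G.IsTree) (huz : G.Adj u z) (hA : (G.induce (↑A : Set V)).Connected) (hz : z ∈ A) :
    (G.induce (↑(Zf G u z A) : Set V)).Connected := by
  apply induce_connected_of_walks ⟨z, by simpa using z_mem_Zf huz hz⟩
  intro a ha b hb
  simp only [Finset.coe_filter, Set.mem_setOf_eq, Zf, Finset.mem_coe] at ha hb
  obtain ⟨p, hp⟩ := walk_in_ZS hT huz hA ha.1 hb.1 ha.2 hb.2
  exact ⟨p, fun c hc => by simpa [Zf, Finset.coe_filter] using hp c hc⟩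

/-- splitting of the avoiding-`u` subtrees. -/
lemma STn_decomp (huz : G.Adj u z) :
    STn G A u = STn G (Af G u z A) u ∪ ST G (Zf G u z A) := by
  ext s
  simp only [mem_STn, mem_ST, Finset.mem_union]
  constructor
  · rintro ⟨hs, hsub, hus⟩
    rcases subtree_side huz hs hus with h | h
    · exact Or.inr ⟨hs, fun c hc => mem_Zf.mpr ⟨hsub hc, h c hc⟩⟩
    · exact Or.inl ⟨hs, fun c hc => mem_Af.mpr ⟨hsub hc, h c hc⟩, hus⟩
  · rintro (⟨hs, hsub, hus⟩ | ⟨hs, hsub⟩)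
    · exact ⟨hs, hsub.trans Af_subset, hus⟩
    · exact ⟨hs, hsub.trans Zf_subset, fun hu => not_ZS_u (mem_Zf.mp (hsub hu)).2⟩

lemma STn_decomp_disjoint :
    Disjoint (STn G (Af G u z A) u) (ST G (Zf G u z A)) := by
  rw [Finset.disjoint_left]
  rintro s hs1 hs2
  rw [mem_STn] at hs1
  rw [mem_ST] at hs2
  obtain ⟨x, hx⟩ := hs1.1.1
  exact (mem_Af.mp (hs1.2.1 hx)).2 (mem_Zf.mp (hs2.2 hx)).2

lemma cnt_STn_decomp (huz : G.Adj u z) :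
    (STn G A u).card
      = (STn G (Af G u z A) u).card + (ST G (Zf G u z A)).card := by
  rw [STn_decomp huz, Finset.card_union_of_disjoint STn_decomp_disjoint]

lemma sum_STn_decomp (huz : G.Adj u z) :
    ∑ s ∈ STn G A u, s.card
      = (∑ s ∈ STn G (Af G u z A) u, s.card)
        + ∑ s ∈ ST G (Zf G u z A), s.card := by
  rw [STn_decomp huz, Finset.sum_union STn_decomp_disjoint]

lemma filterAf_mem_STat {s : Finset V} (hs : s ∈ STat G A u) :
    s.filter (fun x => ¬ ZS G u z x) ∈ STat G (Af G u z A) u := by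
  rw [mem_STat] at hs ⊢
  obtain ⟨hsub, hsA, hus⟩ := hs
  have humem : u ∈ s.filter (fun x => ¬ ZS G u z x) :=
    Finset.mem_filter.mpr ⟨hus, not_ZS_u⟩
  refine ⟨⟨⟨u, humem⟩, ?_⟩, ?_, humem⟩
  · apply induce_connected_of_walks ⟨u, by simpa using humem⟩
    intro a ha b hb
    simp only [Finset.coe_filter, Set.mem_setOf_eq] at ha hb
    obtain ⟨p, hp⟩ := walk_out_ZS (G := G) (u := u) (z := z) hsub.2 ha.1 hb.1 ha.2 hb.2

    exact ⟨p, fun c hc => by simpa [Finset.coe_filter] using hp c hc⟩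
  · intro c hc
    rw [Finset.mem_filter] at hc
    exact mem_Af.mpr ⟨hsA hc.1, hc.2⟩

lemma filterZf_mem (hT : G.IsTree) (huz : G.Adj u z) {s : Finset V} (hs : s ∈ STat G A u) :
    s.filter (fun x => ZS G u z x) ∈ insert ∅ (STat G (Zf G u z A) z) := by
  rcases Finset.eq_empty_or_nonempty (s.filter (fun x => ZS G u z x)) with he | ⟨x, hx⟩
  · rw [he]; exact Finset.mem_insert_self _ _
  · rw [mem_STat] at hs
    obtain ⟨hsub, hsA, hus⟩ := hs
    rw [Finset.mem_filter] at hx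
    have hzs : z ∈ s := subtree_mem_z hT huz hsub hus hx.1 hx.2
    have hzmem : z ∈ s.filter (fun x => ZS G u z x) :=
      Finset.mem_filter.mpr ⟨hzs, ZS_z huz⟩
    refine Finset.mem_insert_of_mem (mem_STat.mpr ⟨⟨⟨z, hzmem⟩, ?_⟩, ?_, hzmem⟩)
    · apply induce_connected_of_walks ⟨z, by simpa using hzmem⟩
      intro a ha b hb
      simp only [Finset.coe_filter, Set.mem_setOf_eq] at ha hb
      obtain ⟨p, hp⟩ := walk_in_ZS hT huz hsub.2 ha.1 hb.1 ha.2 hb.2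
      exact ⟨p, fun c hc => by simpa [Finset.coe_filter] using hp c hc⟩
    · intro c hc
      rw [Finset.mem_filter] at hc
      exact mem_Zf.mpr ⟨hsA hc.1, hc.2⟩

lemma opt_subset_Zf {t2 : Finset V} (h2 : t2 ∈ insert ∅ (STat G (Zf G u z A) z)) :
    t2 ⊆ Zf G u z A := by
  rcases Finset.mem_insert.mp h2 with rfl | h2
  · exact Finset.empty_subset _
  · exact (mem_STat.mp h2).2.1

lemma Af_Zf_disjoint : Disjoint (Af G u z A) (Zf G u z A) := by
  rw [Finset.disjoint_left]
  intro x hx hx2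
  exact (mem_Af.mp hx).2 (mem_Zf.mp hx2).2

lemma glue_mem_STat (huz : G.Adj u z) {t1 t2 : Finset V}
    (h1 : t1 ∈ STat G (Af G u z A) u) (h2 : t2 ∈ insert ∅ (STat G (Zf G u z A) z)) :
    t1 ∪ t2 ∈ STat G A u := by
  rw [mem_STat] at h1
  rcases Finset.mem_insert.mp h2 with rfl | h2
  · rw [Finset.union_empty]
    exact mem_STat.mpr ⟨h1.1, h1.2.1.trans Af_subset, h1.2.2⟩
  · rw [mem_STat] at h2
    refine mem_STat.mpr ⟨subtree_glue huz h1.1 h2.1 h1.2.2 h2.2.2, ?_, Finset.mem_union_left _ h1.2.2⟩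
    exact Finset.union_subset (h1.2.1.trans Af_subset) (h2.2.1.trans Zf_subset)

lemma parts_eq₁ {t1 t2 : Finset V} (h1 : t1 ⊆ Af G u z A) (h2 : t2 ⊆ Zf G u z A) :
    (t1 ∪ t2).filter (fun x => ¬ ZS G u z x) = t1 := by
  ext c
  rw [Finset.mem_filter, Finset.mem_union]
  constructor
  · rintro ⟨hc | hc, hnc⟩
    · exact hc
    · exact absurd (mem_Zf.mp (h2 hc)).2 hnc
  · intro hc
    exact ⟨Or.inl hc, (mem_Af.mp (h1 hc)).2⟩

lemma parts_eq₂ {t1 t2 : Finset V} (h1 : t1 ⊆ Af G u z A) (h2 : t2 ⊆ Zf G u z A) :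
    (t1 ∪ t2).filter (fun x => ZS G u z x) = t2 := by
  ext c
  rw [Finset.mem_filter, Finset.mem_union]
  constructor
  · rintro ⟨hc | hc, hnc⟩
    · exact absurd hnc (mem_Af.mp (h1 hc)).2
    · exact hc
  · intro hc
    exact ⟨Or.inr hc, (mem_Zf.mp (h2 hc)).2⟩

lemma STat_sum_decomp (hT : G.IsTree) (huz : G.Adj u z) (f : Finset V → ℕ) :
    ∑ s ∈ STat G A u, f s
      = ∑ p ∈ (STat G (Af G u z A) u) ×ˢ (insert ∅ (STat G (Zf G u z A) z)),
          f (p.1 ∪ p.2) := by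
  refine Finset.sum_bij'
    (fun s _ => (s.filter (fun x => ¬ ZS G u z x), s.filter (fun x => ZS G u z x)))
    (fun p _ => p.1 ∪ p.2) ?_ ?_ ?_ ?_ ?_
  · intro s hs
    rw [Finset.mem_product]
    exact ⟨filterAf_mem_STat hs, filterZf_mem hT huz hs⟩
  · intro p hp
    rw [Finset.mem_product] at hp
    exact glue_mem_STat huz hp.1 hp.2
  · intro s _
    simp only
    rw [Finset.union_comm]
    exact Finset.filter_union_filter_not_eq _ s
  · intro p hp
    rw [Finset.mem_product] at hp
    have h1 := (mem_STat.mp hp.1).2.1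
    have h2 := opt_subset_Zf hp.2
    simp only [parts_eq₁ h1 h2, parts_eq₂ h1 h2]
  · intro s _
    simp only
    rw [Finset.union_comm]
    rw [Finset.filter_union_filter_not_eq _ s]

lemma empty_not_mem_STat : ∅ ∉ STat G A u := by
  intro h
  rcases (mem_STat.mp h).1.1 with ⟨x, hx⟩
  exact absurd hx (Finset.notMem_empty x)

lemma cnt_STat_decomp (hT : G.IsTree) (huz : G.Adj u z) :
    (STat G A u).card
      = (STat G (Af G u z A) u).card * (1 + (STat G (Zf G u z A) z).card) := by
  have h := STat_sum_decomp (A := A) hT huz (fun _ => 1)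
  rw [Finset.sum_const, Finset.sum_const, smul_eq_mul, mul_one, smul_eq_mul, mul_one] at h
  rw [h, Finset.card_product, Finset.card_insert_of_notMem empty_not_mem_STat]
  ring

lemma sum_STat_decomp (hT : G.IsTree) (huz : G.Adj u z) :
    ∑ s ∈ STat G A u, s.card
      = (∑ s ∈ STat G (Af G u z A) u, s.card) * (1 + (STat G (Zf G u z A) z).card)
        + (STat G (Af G u z A) u).card * ∑ s ∈ STat G (Zf G u z A) z, s.card := by
  have h := STat_sum_decomp (A := A) hT huz (fun s => s.card)
  rw [h]
  rw [Finset.sum_product]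
  have hcard : ∀ t1 ∈ STat G (Af G u z A) u, ∀ t2 ∈ insert ∅ (STat G (Zf G u z A) z),
      (t1 ∪ t2).card = t1.card + t2.card := by
    intro t1 h1 t2 h2
    apply Finset.card_union_of_disjoint
    exact Finset.disjoint_of_subset_left (mem_STat.mp h1).2.1
      (Finset.disjoint_of_subset_right (opt_subset_Zf h2) Af_Zf_disjoint)
  calc ∑ t1 ∈ STat G (Af G u z A) u, ∑ t2 ∈ insert ∅ (STat G (Zf G u z A) z), (t1 ∪ t2).card
      = ∑ t1 ∈ STat G (Af G u z A) u, ∑ t2 ∈ insert ∅ (STat G (Zf G u z A) z),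
          (t1.card + t2.card) := by
        apply Finset.sum_congr rfl
        intro t1 h1
        apply Finset.sum_congr rfl
        intro t2 h2
        exact hcard t1 h1 t2 h2
    _ = _ := by
        rw [Finset.sum_comm]
        simp [Finset.sum_add_distrib, Finset.sum_insert empty_not_mem_STat,
          Finset.card_insert_of_notMem empty_not_mem_STat, Finset.mul_sum, Finset.sum_const,
          mul_comm, add_comm, add_mul, mul_add]
        ring

end Decomp

/-- STn over a singleton is empty. -/
lemma STn_singleton (u : V) : STn G {u} u = ∅ := by
  ext s
  simp only [mem_STn, Finset.notMem_empty, iff_false, not_and]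
  intro hs hsub hus
  rcases Finset.subset_singleton_iff.mp hsub with rfl | rfl
  · rcases hs.1 with ⟨x, hx⟩; exact absurd hx (Finset.notMem_empty x)
  · exact hus (Finset.mem_singleton_self u)

lemma exists_adj_mem {A : Finset V} (hconn : (G.induce (↑A : Set V)).Connected)
    {u : V} (hu : u ∈ A) (h2 : 2 ≤ A.card) : ∃ z ∈ A, G.Adj u z := by
  classical
  obtain ⟨x, hx, hxu⟩ := Finset.exists_mem_ne (s := A) (by omega) u
  obtain ⟨p, hpath, hps⟩ := connected_walk hconn hu hx
  obtain ⟨y, hadj, q, hq⟩ := SimpleGraph.Walk.exists_eq_cons_of_ne (Ne.symm hxu) p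
  refine ⟨y, hps y ?_, hadj⟩
  rw [hq, SimpleGraph.Walk.support_cons]
  exact List.mem_cons_of_mem _ q.start_mem_support

section MainInduction

variable {G : SimpleGraph V} [Fintype V]

lemma card_pos_STat {A : Finset V} {u : V} (hu : u ∈ A) : 1 ≤ (STat G A u).card :=
  Finset.card_pos.mpr ⟨{u}, singleton_mem_STat hu⟩

lemma lemC2 (hT : G.IsTree) : ∀ (k : ℕ) (A : Finset V), A.card ≤ k →
    (G.induce (↑A : Set V)).Connected → ∀ u ∈ A,
    2 * (ST G A).card ≤ (STat G A u).card * ((STat G A u).card + 1) := by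
  intro k
  induction k with
  | zero =>
    intro A hA _ u hu
    rw [Nat.le_zero, Finset.card_eq_zero] at hA
    subst hA
    exact absurd hu (Finset.notMem_empty u)
  | succ k ih =>
    intro A hcard hconn u hu
    by_cases hA1 : A.card ≤ 1
    · have hAu : A = {u} := by
        rw [Finset.eq_singleton_iff_unique_mem]
        exact ⟨hu, fun x hx => Finset.card_le_one.mp hA1 x hx u hu⟩
      subst hAu
      rw [ST_singleton, STat_singleton]
      simp
    · obtain ⟨z, hz, huz⟩ := exists_adj_mem hconn hu (by omega)
      have hAfcard : (Af G u z A).card ≤ k := by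
        have := Finset.card_lt_card (Af_ssubset huz hz)
        omega
      have hZfcard : (Zf G u z A).card ≤ k := by
        have := Finset.card_lt_card (Zf_ssubset (G := G) (z := z) hu)
        omega
      have ihA := ih (Af G u z A) hAfcard (Af_connected huz hconn hu) u (u_mem_Af hu)
      have ihZ := ih (Zf G u z A) hZfcard (Zf_connected hT huz hconn hz) z (z_mem_Zf huz hz)
      have e1 : (STat G A u).card
          = (STat G (Af G u z A) u).card * (1 + (STat G (Zf G u z A) z).card) :=
        cnt_STat_decomp hT huz
      have e2 : (ST G A).card = (STat G A u).card + (STn G A u).card := cnt_split A u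
      have e3 : (STn G A u).card
          = (STn G (Af G u z A) u).card + (ST G (Zf G u z A)).card := cnt_STn_decomp huz
      have e4 : (ST G (Af G u z A)).card
          = (STat G (Af G u z A) u).card + (STn G (Af G u z A) u).card :=
        cnt_split (Af G u z A) u
      have hn1 : 1 ≤ (STat G (Af G u z A) u).card := card_pos_STat (u_mem_Af hu)
      have ha1 : 1 ≤ (STat G (Zf G u z A) z).card := card_pos_STat (z_mem_Zf huz hz)
      set n' := (STat G (Af G u z A) u).card
      set a := (STat G (Zf G u z A) z).card
      set m1 := (STn G (Af G u z A) u).card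
      set N2 := (ST G (Zf G u z A)).card
      rw [e2, e3, e1]
      rw [e4] at ihA
      nlinarith [ihA, ihZ, hn1, ha1, Nat.mul_le_mul ihA ihZ]

lemma lemB (hT : G.IsTree) : ∀ (k : ℕ) (A : Finset V), A.card ≤ k →
    (G.induce (↑A : Set V)).Connected → ∀ u ∈ A,
    3 * (∑ s ∈ STat G A u, s.card)
      ≤ (STat G A u).card * ((STat G A u).card + 1) + (ST G A).card := by
  intro k
  induction k with
  | zero =>
    intro A hA _ u hu
    rw [Nat.le_zero, Finset.card_eq_zero] at hA
    subst hA
    exact absurd hu (Finset.notMem_empty u)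
  | succ k ih =>
    intro A hcard hconn u hu
    by_cases hA1 : A.card ≤ 1
    · have hAu : A = {u} := by
        rw [Finset.eq_singleton_iff_unique_mem]
        exact ⟨hu, fun x hx => Finset.card_le_one.mp hA1 x hx u hu⟩
      subst hAu
      rw [ST_singleton, STat_singleton]
      simp
    · obtain ⟨z, hz, huz⟩ := exists_adj_mem hconn hu (by omega)
      have hAfcard : (Af G u z A).card ≤ k := by
        have := Finset.card_lt_card (Af_ssubset huz hz)
        omega
      have hZfcard : (Zf G u z A).card ≤ k := by
        have := Finset.card_lt_card (Zf_ssubset (G := G) (z := z) hu)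
        omega
      have hAfconn := Af_connected huz hconn hu
      have hZfconn := Zf_connected hT huz hconn hz
      have ihA := ih (Af G u z A) hAfcard hAfconn u (u_mem_Af hu)
      have ihZ := ih (Zf G u z A) hZfcard hZfconn z (z_mem_Zf huz hz)
      have c2A := lemC2 hT (Af G u z A).card (Af G u z A) le_rfl hAfconn u (u_mem_Af hu)
      have c2Z := lemC2 hT (Zf G u z A).card (Zf G u z A) le_rfl hZfconn z (z_mem_Zf huz hz)
      have e1 : (STat G A u).card
          = (STat G (Af G u z A) u).card * (1 + (STat G (Zf G u z A) z).card) :=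
        cnt_STat_decomp hT huz
      have es : ∑ s ∈ STat G A u, s.card
          = (∑ s ∈ STat G (Af G u z A) u, s.card) * (1 + (STat G (Zf G u z A) z).card)
            + (STat G (Af G u z A) u).card * ∑ s ∈ STat G (Zf G u z A) z, s.card :=
        sum_STat_decomp hT huz
      have e2 : (ST G A).card = (STat G A u).card + (STn G A u).card := cnt_split A u
      have e3 : (STn G A u).card
          = (STn G (Af G u z A) u).card + (ST G (Zf G u z A)).card := cnt_STn_decomp huz
      have e4 : (ST G (Af G u z A)).card
          = (STat G (Af G u z A) u).card + (STn G (Af G u z A) u).card :=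
        cnt_split (Af G u z A) u
      have hn1 : 1 ≤ (STat G (Af G u z A) u).card := card_pos_STat (u_mem_Af hu)
      have ha1 : 1 ≤ (STat G (Zf G u z A) z).card := card_pos_STat (z_mem_Zf huz hz)
      set n' := (STat G (Af G u z A) u).card
      set a := (STat G (Zf G u z A) z).card
      set m1 := (STn G (Af G u z A) u).card
      set N2 := (ST G (Zf G u z A)).card
      set r' := ∑ s ∈ STat G (Af G u z A) u, s.card
      set rz := ∑ s ∈ STat G (Zf G u z A) z, s.card
      rw [e4] at c2A ihA
      rw [es, e2, e3, e1]
      zify at ihA ihZ c2A c2Z hn1 ha1 ⊢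
      have P1 := mul_le_mul_of_nonneg_left ihA (by positivity : (0:ℤ) ≤ 1 + (a:ℤ))
      have P2 := mul_le_mul_of_nonneg_left ihZ (by positivity : (0:ℤ) ≤ (n':ℤ))
      have P3 := mul_le_mul_of_nonneg_left c2A (by positivity : (0:ℤ) ≤ (a:ℤ))
      have P4 := mul_le_mul_of_nonneg_left c2Z (by linarith : (0:ℤ) ≤ (n':ℤ) - 1)
      have P5 : (0:ℤ) ≤ (a:ℤ) * ((n':ℤ)-1)^2 :=
        mul_nonneg (by positivity) (sq_nonneg _)
      have P6 : (0:ℤ) ≤ ((a:ℤ)*(a:ℤ)) * ((2*(n':ℤ)-1) * ((n':ℤ)-1)) :=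
        mul_nonneg (by positivity) (mul_nonneg (by linarith) (by linarith))
      linarith [P1, P2, P3, P4, P5, P6]

lemma lemA (hT : G.IsTree) : ∀ (k : ℕ) (A : Finset V), A.card ≤ k →
    (G.induce (↑A : Set V)).Connected → ∀ u ∈ A,
    3 * (∑ s ∈ ST G A, s.card) ≤ ((STat G A u).card + 2) * (ST G A).card := by
  intro k
  induction k with
  | zero =>
    intro A hA _ u hu
    rw [Nat.le_zero, Finset.card_eq_zero] at hA
    subst hA
    exact absurd hu (Finset.notMem_empty u)
  | succ k ih =>
    intro A hcard hconn u hu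
    by_cases hA1 : A.card ≤ 1
    · have hAu : A = {u} := by
        rw [Finset.eq_singleton_iff_unique_mem]
        exact ⟨hu, fun x hx => Finset.card_le_one.mp hA1 x hx u hu⟩
      subst hAu
      rw [ST_singleton, STat_singleton]
      simp
    · obtain ⟨z, hz, huz⟩ := exists_adj_mem hconn hu (by omega)
      have hAfcard : (Af G u z A).card ≤ k := by
        have := Finset.card_lt_card (Af_ssubset huz hz)
        omega
      have hZfcard : (Zf G u z A).card ≤ k := by
        have := Finset.card_lt_card (Zf_ssubset (G := G) (z := z) hu)
        omega
      have hAfconn := Af_connected huz hconn hu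
      have hZfconn := Zf_connected hT huz hconn hz
      have ihA := ih (Af G u z A) hAfcard hAfconn u (u_mem_Af hu)
      have ihZ := ih (Zf G u z A) hZfcard hZfconn z (z_mem_Zf huz hz)
      have bA := lemB hT (Af G u z A).card (Af G u z A) le_rfl hAfconn u (u_mem_Af hu)
      have bZ := lemB hT (Zf G u z A).card (Zf G u z A) le_rfl hZfconn z (z_mem_Zf huz hz)
      have e1 : (STat G A u).card
          = (STat G (Af G u z A) u).card * (1 + (STat G (Zf G u z A) z).card) :=
        cnt_STat_decomp hT huz
      have es : ∑ s ∈ STat G A u, s.card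
          = (∑ s ∈ STat G (Af G u z A) u, s.card) * (1 + (STat G (Zf G u z A) z).card)
            + (STat G (Af G u z A) u).card * ∑ s ∈ STat G (Zf G u z A) z, s.card :=
        sum_STat_decomp hT huz
      have e2 : (ST G A).card = (STat G A u).card + (STn G A u).card := cnt_split A u
      have e2s : ∑ s ∈ ST G A, s.card
          = (∑ s ∈ STat G A u, s.card) + ∑ s ∈ STn G A u, s.card := sum_split A u
      have e3 : (STn G A u).card
          = (STn G (Af G u z A) u).card + (ST G (Zf G u z A)).card := cnt_STn_decomp huz
      have e3s : ∑ s ∈ STn G A u, s.card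
          = (∑ s ∈ STn G (Af G u z A) u, s.card) + ∑ s ∈ ST G (Zf G u z A), s.card :=
        sum_STn_decomp huz
      have e4 : (ST G (Af G u z A)).card
          = (STat G (Af G u z A) u).card + (STn G (Af G u z A) u).card :=
        cnt_split (Af G u z A) u
      have e4s : ∑ s ∈ ST G (Af G u z A), s.card
          = (∑ s ∈ STat G (Af G u z A) u, s.card) + ∑ s ∈ STn G (Af G u z A) u, s.card :=
        sum_split (Af G u z A) u
      have hn1 : 1 ≤ (STat G (Af G u z A) u).card := card_pos_STat (u_mem_Af hu)
      have ha1 : 1 ≤ (STat G (Zf G u z A) z).card := card_pos_STat (z_mem_Zf huz hz)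
      set n' := (STat G (Af G u z A) u).card
      set a := (STat G (Zf G u z A) z).card
      set m1 := (STn G (Af G u z A) u).card
      set N2 := (ST G (Zf G u z A)).card
      set r' := ∑ s ∈ STat G (Af G u z A) u, s.card
      set rz := ∑ s ∈ STat G (Zf G u z A) z, s.card
      set M1 := ∑ s ∈ STn G (Af G u z A) u, s.card
      set R2 := ∑ s ∈ ST G (Zf G u z A), s.card
      rw [e4, e4s] at ihA
      rw [e4] at bA
      rw [e2s, e3s, es, e2, e3, e1]
      zify at ihA ihZ bA bZ hn1 ha1 ⊢
      have P3 := mul_le_mul_of_nonneg_left bA (by positivity : (0:ℤ) ≤ (a:ℤ))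
      have P4 := mul_le_mul_of_nonneg_left bZ (by positivity : (0:ℤ) ≤ (n':ℤ))
      have hn0 : (0:ℤ) ≤ (n':ℤ) - 1 := by linarith
      have P5 : (0:ℤ) ≤ (a:ℤ) * (((n':ℤ)-1) * (m1:ℤ)) :=
        mul_nonneg (by positivity) (mul_nonneg hn0 (by positivity))
      have P6 : (0:ℤ) ≤ (a:ℤ) * (((n':ℤ)-1) * (N2:ℤ)) :=
        mul_nonneg (by positivity) (mul_nonneg hn0 (by positivity))
      have P7 : (0:ℤ) ≤ ((n':ℤ) * (a:ℤ)) * (((n':ℤ)-1) * (1 + (a:ℤ))) :=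
        mul_nonneg (by positivity) (mul_nonneg hn0 (by positivity))
      linarith [ihA, ihZ, P3, P4, P5, P6, P7]

lemma lemMain (hT : G.IsTree) : ∀ (k : ℕ) (A : Finset V), A.card ≤ k →
    (G.induce (↑A : Set V)).Connected → ∀ v ∈ A,
    3 * (∑ s ∈ STn G A v, s.card) ≤ ((STat G A v).card + 1) * (STn G A v).card := by
  intro k
  induction k with
  | zero =>
    intro A hA _ v hv
    rw [Nat.le_zero, Finset.card_eq_zero] at hA
    subst hA
    exact absurd hv (Finset.notMem_empty v)
  | succ k ih =>
    intro A hcard hconn v hv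
    by_cases hA1 : A.card ≤ 1
    · have hAu : A = {v} := by
        rw [Finset.eq_singleton_iff_unique_mem]
        exact ⟨hv, fun x hx => Finset.card_le_one.mp hA1 x hx v hv⟩
      subst hAu
      rw [STn_singleton]
      simp
    · obtain ⟨z, hz, huz⟩ := exists_adj_mem hconn hv (by omega)
      have hAfcard : (Af G v z A).card ≤ k := by
        have := Finset.card_lt_card (Af_ssubset huz hz)
        omega
      have hZfcard : (Zf G v z A).card ≤ k := by
        have := Finset.card_lt_card (Zf_ssubset (G := G) (z := z) hv)
        omega
      have hAfconn := Af_connected huz hconn hv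
      have hZfconn := Zf_connected hT huz hconn hz
      have ihA := ih (Af G v z A) hAfcard hAfconn v (u_mem_Af hv)
      have aZ := lemA hT (Zf G v z A).card (Zf G v z A) le_rfl hZfconn z (z_mem_Zf huz hz)
      have e1 : (STat G A v).card
          = (STat G (Af G v z A) v).card * (1 + (STat G (Zf G v z A) z).card) :=
        cnt_STat_decomp hT huz
      have e3 : (STn G A v).card
          = (STn G (Af G v z A) v).card + (ST G (Zf G v z A)).card := cnt_STn_decomp huz
      have e3s : ∑ s ∈ STn G A v, s.card
          = (∑ s ∈ STn G (Af G v z A) v, s.card) + ∑ s ∈ ST G (Zf G v z A), s.card :=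
        sum_STn_decomp huz
      have hn1 : 1 ≤ (STat G (Af G v z A) v).card := card_pos_STat (u_mem_Af hv)
      have ha1 : 1 ≤ (STat G (Zf G v z A) z).card := card_pos_STat (z_mem_Zf huz hz)
      set n' := (STat G (Af G v z A) v).card
      set a := (STat G (Zf G v z A) z).card
      set m1 := (STn G (Af G v z A) v).card
      set N2 := (ST G (Zf G v z A)).card
      set M1 := ∑ s ∈ STn G (Af G v z A) v, s.card
      set R2 := ∑ s ∈ ST G (Zf G v z A), s.card
      rw [e3s, e3, e1]
      zify at ihA aZ hn1 ha1 ⊢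
      have P5 : (0:ℤ) ≤ ((n':ℤ) * (a:ℤ)) * (m1:ℤ) := by positivity
      have P6 : (0:ℤ) ≤ (((n':ℤ) - 1) * (1 + (a:ℤ))) * (N2:ℤ) :=
        mul_nonneg (mul_nonneg (by linarith) (by positivity)) (by positivity)
      linarith [ihA, aZ, P5, P6]

lemma univ_connected (hT : G.IsTree) :
    (G.induce (↑(Finset.univ : Finset V) : Set V)).Connected := by
  rw [Finset.coe_univ]
  exact (SimpleGraph.induceUnivIso G).connected_iff.mpr hT.isConnected

lemma ST_univ_eq : ST G (Finset.univ : Finset V)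
    = Finset.univ.filter (fun s : Finset V => IsSubtree G s) := by
  ext s
  simp [mem_ST, Finset.mem_filter]

lemma STat_univ_eq (v : V) : STat G (Finset.univ : Finset V) v
    = Finset.univ.filter (fun s : Finset V => IsSubtree G s ∧ v ∈ s) := by
  ext s
  simp [mem_STat, Finset.mem_filter]

lemma STn_univ_card_pos (hcard : 2 ≤ Fintype.card V) (v : V) :
    0 < (STn G (Finset.univ : Finset V) v).card := by
  obtain ⟨w, hw⟩ := Fintype.exists_ne_of_one_lt_card (by omega) v
  refine Finset.card_pos.mpr ⟨{w}, mem_STn.mpr ⟨singleton_subtree G w, Finset.subset_univ _, ?_⟩⟩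
  simp [hw.symm]

end MainInduction

end Counting

end MyAux

open MyAux

/-- for a tree `T` with at least two vertices and a vertex `v`, the mean
subtree order of the forest `T − v`, namely `(R_T − R_v)/(N_T − N_v)`, is at most
`(N_v + 1)/3`. -/
theorem mean_subtree_order_delete_vertex_le
    [Fintype V] (G : SimpleGraph V) (hT : G.IsTree) (hcard : 2 ≤ Fintype.card V) (v : V) :
    ((sumSubtrees G : ℚ) - (sumSubtreesAt G v : ℚ)) /
        ((numSubtrees G : ℚ) - (numSubtreesAt G v : ℚ)) ≤
      ((numSubtreesAt G v : ℚ) + 1) / 3 := by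
  open MyAux in
  classical
  have hconn := univ_connected (G := G) hT
  have key := lemMain hT (Finset.univ : Finset V).card Finset.univ le_rfl hconn v
    (Finset.mem_univ v)
  have ecnt : (ST G (Finset.univ : Finset V)).card
      = (STat G (Finset.univ : Finset V) v).card + (STn G (Finset.univ : Finset V) v).card :=
    cnt_split Finset.univ v
  have esum : ∑ s ∈ ST G (Finset.univ : Finset V), s.card
      = (∑ s ∈ STat G (Finset.univ : Finset V) v, s.card)
        + ∑ s ∈ STn G (Finset.univ : Finset V) v, s.card :=
    sum_split Finset.univ v
  have eN : numSubtrees G = (ST G (Finset.univ : Finset V)).card := by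
    rw [ST_univ_eq]; rfl
  have eR : sumSubtrees G = ∑ s ∈ ST G (Finset.univ : Finset V), s.card := by
    rw [ST_univ_eq]; rfl
  have en : numSubtreesAt G v = (STat G (Finset.univ : Finset V) v).card := by
    rw [STat_univ_eq]; rfl
  have er : sumSubtreesAt G v = ∑ s ∈ STat G (Finset.univ : Finset V) v, s.card := by
    rw [STat_univ_eq]; rfl
  have hm := STn_univ_card_pos (G := G) hcard v
  set M := ∑ s ∈ STn G (Finset.univ : Finset V) v, s.card
  set m := (STn G (Finset.univ : Finset V) v).card
  set n := (STat G (Finset.univ : Finset V) v).card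
  set r := ∑ s ∈ STat G (Finset.univ : Finset V) v, s.card
  rw [eN, eR, en, er, ecnt, esum]
  have h1 : ((r : ℚ) + M) - r = (M : ℚ) := by ring
  have h2 : ((n : ℚ) + m) - n = (m : ℚ) := by ring
  push_cast
  rw [h1, h2]
  rw [div_le_div_iff₀ (by exact_mod_cast hm) (by norm_num)]
  have : 3 * M ≤ (n + 1) * m := key
  calc (M:ℚ) * 3 = 3 * M := by ring
    _ ≤ (n + 1) * m := by exact_mod_cast this
    _ = ((n:ℚ) + 1) * m := by push_cast; ring
end
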